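/- arXiv:2506.13962 — 4 statements merged into one kernel-verified Lean document; each statement's English description precedes it below -/
import Mathlib

section
/- For every natural number n ≥ 3 divisible by 3, there exists a set A of n/3 + 2 partial transformations of an n-element set such that A admits a carefully synchronising word, and every carefully synchronising word for A has length at least 3^(n/3) + 1. -/
/-- Applying a word (list) of partial transformations of `Fin n` to a state `q`,
composing from left to right, with `none` (undefined) propagating. -/
def ptApply {n : ℕ} (w : List (Fin n → Option (Fin n))) (q : Fin n) : Option (Fin n) :=
  w.foldl (fun o f => o.bind f) (some q)

/-- A word `w` over the alphabet `A` is carefully synchronising: all its letters are in `A`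
and it maps every state to one common state `q₀`. -/
def CarefullySync {n : ℕ} (A : Finset (Fin n → Option (Fin n)))
    (w : List (Fin n → Option (Fin n))) : Prop :=
  (∀ g ∈ w, g ∈ A) ∧ ∃ q₀ : Fin n, ∀ q : Fin n, ptApply w q = some q₀


namespace CarHelper

def pApply {β : Type*} (w : List (β → Option β)) (b : β) : Option β :=
  w.foldl (fun o f => o.bind f) (some b)

lemma foldl_none {β : Type*} (w : List (β → Option β)) :
    w.foldl (fun o f => o.bind f) none = none := by
  induction w with
  | nil => rfl
  | cons g w ih => simpa using ih

lemma pApply_cons {β : Type*} (g : β → Option β) (w : List (β → Option β)) (b : β) :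
    pApply (g :: w) b = (g b).bind (pApply w) := by
  cases hb : g b with
  | none => simp [pApply, hb, foldl_none]
  | some c => simp [pApply, hb]

def SyncW {β : Type*} (w : List (β → Option β)) (S : Set β) : Prop :=
  ∃ b0, ∀ b ∈ S, pApply w b = some b0

def pimg {β : Type*} (g : β → Option β) (S : Set β) : Set β :=
  {b | ∃ a ∈ S, g a = some b}

lemma syncW_cons {β : Type*} {g : β → Option β} {w : List (β → Option β)} {S : Set β}
    (h : SyncW (g :: w) S) :
    (∀ a ∈ S, ∃ b, g a = some b) ∧ SyncW w (pimg g S) := by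
  obtain ⟨b0, hb⟩ := h
  constructor
  · intro a ha
    have h1 := hb a ha
    rw [pApply_cons] at h1
    cases hga : g a with
    | none => rw [hga] at h1; simp at h1
    | some c => exact ⟨c, rfl⟩
  · refine ⟨b0, ?_⟩
    rintro b ⟨a, ha, hga⟩
    have h1 := hb a ha
    rw [pApply_cons, hga] at h1
    simpa using h1

lemma syncW_cons' {β : Type*} {g : β → Option β} {w : List (β → Option β)} {S S' : Set β}
    (hdef : ∀ a ∈ S, ∃ b, g a = some b ∧ b ∈ S') (h : SyncW w S') : SyncW (g :: w) S := by
  obtain ⟨b0, hb⟩ := h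
  refine ⟨b0, fun a ha => ?_⟩
  obtain ⟨b, hgb, hbS⟩ := hdef a ha
  rw [pApply_cons, hgb]
  simpa using hb b hbS

def conjE {β γ : Type*} (e : β ≃ γ) (g : β → Option β) : γ → Option γ :=
  fun c => (g (e.symm c)).map e

lemma pApply_map_conjE {β γ : Type*} (e : β ≃ γ) (w : List (β → Option β)) (b : β) :
    pApply (w.map (conjE e)) (e b) = (pApply w b).map e := by
  induction w generalizing b with
  | nil => rfl
  | cons g w ih =>
    rw [List.map_cons, pApply_cons, pApply_cons]
    cases hgb : g b with
    | none => simp [conjE, hgb]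
    | some c => simp [conjE, hgb, ih c]

lemma conjE_symm_conjE {β γ : Type*} (e : β ≃ γ) (g : β → Option β) :
    conjE e.symm (conjE e g) = g := by
  funext a
  simp [conjE, Option.map_map]

lemma conjE_injective {β γ : Type*} (e : β ≃ γ) : Function.Injective (conjE e) := by
  intro g g' h
  have := congrArg (conjE e.symm) h
  rwa [conjE_symm_conjE, conjE_symm_conjE] at this


section Auto
variable {m : ℕ}

abbrev PS (m : ℕ) := Fin m × Fin 3

def bw (G : Fin m → Fin 3 → Option (Fin 3)) : PS m → Option (PS m) :=
  fun p => (G p.1 p.2).map (fun y => (p.1, y))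

def Gs : Fin m → Fin 3 → Option (Fin 3) := fun i x =>
  some (if i.val + 1 = m ∧ ¬ x.val = 2 then x else 0)

def Ginc (j : ℕ) : Fin m → Fin 3 → Option (Fin 3) := fun i x =>
  if i.val < j then (if x.val = 2 then some 0 else none)
  else if i.val = j then (if x.val = 0 then some 1 else if x.val = 1 then some 2 else none)
  else some x

def Gr : Fin m → Fin 3 → Option (Fin 3) := fun i x =>
  if i.val + 1 = m then some (x + 1) else if x.val = 2 then some 0 else none

def sF : PS m → Option (PS m) := bw Gs
def incF (j : ℕ) : PS m → Option (PS m) := bw (Ginc j)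
def rF : PS m → Option (PS m) := bw Gr

def fF (hm : 0 < m) : PS m → Option (PS m) := fun p =>
  if (p.1.val + 1 = m ∧ ¬ p.2.val = 1) ∨ (¬ p.1.val + 1 = m ∧ p.2.val = 2)
  then some (⟨0, hm⟩, 0) else none

def Ab (hm : 0 < m) : Finset (PS m → Option (PS m)) :=
  insert sF (insert rF (insert (fF hm) ((Finset.range (m-1)).image incF)))

def ClsSet (B : Fin m → Fin 3 → Prop) : Set (PS m) := {p | B p.1 p.2}

lemma ClsSet_congr {B B' : Fin m → Fin 3 → Prop} (h : ∀ i y, B i y ↔ B' i y) :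
    ClsSet B = ClsSet B' := Set.ext fun p => h p.1 p.2

lemma mem_ClsSet {B : Fin m → Fin 3 → Prop} {p : PS m} : p ∈ ClsSet B ↔ B p.1 p.2 := Iff.rfl

lemma pimg_bw (G : Fin m → Fin 3 → Option (Fin 3)) (B : Fin m → Fin 3 → Prop) :
    pimg (bw G) (ClsSet B) = ClsSet (fun i y => ∃ x, B i x ∧ G i x = some y) := by
  ext ⟨i, y⟩
  constructor
  · rintro ⟨⟨i', x⟩, hB, hg⟩
    simp only [bw] at hg
    cases hGx : G i' x with
    | none => rw [hGx] at hg; simp at hg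
    | some z =>
      rw [hGx] at hg
      simp only [Option.map_some, Option.some.injEq, Prod.mk.injEq] at hg
      obtain ⟨h1, h2⟩ := hg
      subst h1; subst h2
      exact ⟨x, hB, hGx⟩
  · rintro ⟨x, hBx, hGx⟩
    exact ⟨(i, x), hBx, by simp [bw, hGx]⟩

def Bfull : Fin m → Fin 3 → Prop := fun _ _ => True
def Bcfg (d : Fin m → Fin 3) : Fin m → Fin 3 → Prop :=
  fun i x => x = d i ∨ (i.val + 1 = m ∧ x = d i + 1)
def Bdeg (d : Fin m → Fin 3) : Fin m → Fin 3 → Prop := fun i x => x = d i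

def dInc (d : Fin m → Fin 3) (j : ℕ) : Fin m → Fin 3 :=
  fun i => if i.val < j then 0 else if i.val = j then d i + 1 else d i

def dv (d : Fin m → Fin 3) : ℕ → ℕ := fun k => if h : k < m then (d ⟨k, h⟩).val else 0

def valT (t : ℕ) (d : Fin m → Fin 3) : ℕ :=
  ∑ k ∈ Finset.range m, if k < t then dv d k * 3 ^ k else 0

end Auto

section ValLemmas
variable {m : ℕ}

lemma two_geom (j : ℕ) : (∑ k ∈ Finset.range j, 2 * 3 ^ k) + 1 = 3 ^ j := by
  induction j with
  | zero => rfl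
  | succ j ih => rw [Finset.sum_range_succ, pow_succ]; omega

lemma dv_le (d : Fin m → Fin 3) (k : ℕ) : dv d k ≤ 2 := by
  unfold dv
  split
  · exact Nat.le_of_lt_succ (by exact (Fin.isLt _))
  · exact Nat.zero_le _

lemma valT_zero (t : ℕ) (d : Fin m → Fin 3) (h : ∀ k, k < t → dv d k = 0) :
    valT t d = 0 := by
  apply Finset.sum_eq_zero
  intro k _
  by_cases hkt : k < t
  · simp [hkt, h k hkt]
  · simp [hkt]

lemma valT_all2 (t : ℕ) (d : Fin m → Fin 3) (ht : t ≤ m) (h : ∀ k, k < t → dv d k = 2) :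
    valT t d + 1 = 3 ^ t := by
  unfold valT
  rw [← Finset.sum_range_add_sum_Ico _ ht]
  have h1 : ∑ k ∈ Finset.Ico t m, (if k < t then dv d k * 3 ^ k else 0) = 0 := by
    apply Finset.sum_eq_zero
    intro k hk
    rw [Finset.mem_Ico] at hk
    simp [show ¬ k < t by omega]
  have h2 : ∑ k ∈ Finset.range t, (if k < t then dv d k * 3 ^ k else 0)
      = ∑ k ∈ Finset.range t, 2 * 3 ^ k := by
    apply Finset.sum_congr rfl
    intro k hk
    rw [Finset.mem_range] at hk
    simp [hk, h k hk]
  rw [h1, h2, add_zero, two_geom]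

lemma valT_inc (t j : ℕ) (d d' : Fin m → Fin 3) (hjt : j < t) (htm : t ≤ m)
    (hlow : ∀ k, k < j → dv d k = 2)
    (hdj : dv d j ≤ 1)
    (h'low : ∀ k, k < j → dv d' k = 0)
    (h'j : dv d' j = dv d j + 1)
    (h'hi : ∀ k, j < k → dv d' k = dv d k) :
    valT t d' = valT t d + 1 := by
  have hjm : j < m := lt_of_lt_of_le hjt htm
  have hsplit : ∀ D : Fin m → Fin 3, valT t D
      = ((∑ k ∈ Finset.range j, if k < t then dv D k * 3 ^ k else 0)
        + (if j < t then dv D j * 3 ^ j else 0))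
        + ∑ k ∈ Finset.Ico (j+1) m, (if k < t then dv D k * 3 ^ k else 0) := by
    intro D
    unfold valT
    rw [← Finset.sum_range_add_sum_Ico _ (show j + 1 ≤ m from hjm), Finset.sum_range_succ]
  rw [hsplit d, hsplit d']
  have e1 : ∑ k ∈ Finset.range j, (if k < t then dv d' k * 3 ^ k else 0) = 0 := by
    apply Finset.sum_eq_zero
    intro k hk
    rw [Finset.mem_range] at hk
    simp [h'low k hk]
  have e2 : ∑ k ∈ Finset.range j, (if k < t then dv d k * 3 ^ k else 0)
      = ∑ k ∈ Finset.range j, 2 * 3 ^ k := by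
    apply Finset.sum_congr rfl
    intro k hk
    rw [Finset.mem_range] at hk
    simp [show k < t by omega, hlow k hk]
  have e3 : ∑ k ∈ Finset.Ico (j+1) m, (if k < t then dv d' k * 3 ^ k else 0)
      = ∑ k ∈ Finset.Ico (j+1) m, (if k < t then dv d k * 3 ^ k else 0) := by
    apply Finset.sum_congr rfl
    intro k hk
    rw [Finset.mem_Ico] at hk
    rw [h'hi k (by omega)]
  have e4 : (if j < t then dv d' j * 3 ^ j else 0) = dv d j * 3 ^ j + 3 ^ j := by
    rw [if_pos hjt, h'j, add_mul, one_mul]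
  have hg := two_geom j
  have h3j : 0 < 3 ^ j := Nat.pow_pos (by norm_num)
  rw [e1, e2, e3, e4, if_pos hjt]
  omega

lemma valT_top (d : Fin m → Fin 3) (hm : 0 < m) (h : dv d (m-1) = 2) :
    2 * 3 ^ (m-1) ≤ valT m d := by
  have hmem : m - 1 ∈ Finset.range m := by
    rw [Finset.mem_range]; omega
  calc 2 * 3 ^ (m-1) = (if m - 1 < m then dv d (m-1) * 3 ^ (m-1) else 0) := by
        rw [if_pos (by omega), h]
    _ ≤ valT m d := Finset.single_le_sum (f := fun k => if k < m then dv d k * 3 ^ k else 0)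
        (fun k _ => Nat.zero_le _) hmem

lemma valT_lt (d : Fin m → Fin 3) (j : ℕ) (hj : j < m) (hdj : dv d j ≤ 1) :
    valT m d + 1 < 3 ^ m := by
  have h1 : valT m d < ∑ k ∈ Finset.range m, 2 * 3 ^ k := by
    apply Finset.sum_lt_sum
    · intro k hk
      rw [Finset.mem_range] at hk
      have := dv_le d k
      simp only [if_pos hk]
      exact Nat.mul_le_mul_right _ this
    · refine ⟨j, by rw [Finset.mem_range]; exact hj, ?_⟩
      simp only [if_pos hj]
      have h3j : 0 < 3 ^ j := Nat.pow_pos (by norm_num)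
      exact (Nat.mul_lt_mul_right h3j).2 (by omega)
  have := two_geom m
  omega

lemma valT_dInc (d : Fin m → Fin 3) (j : ℕ) (hj : j < m)
    (hlow : ∀ i : Fin m, i.val < j → d i = 2)
    (hdj : ¬ (d ⟨j, hj⟩).val = 2)
    (t : ℕ) (hjt : j < t) (htm : t ≤ m) :
    valT t (dInc d j) = valT t d + 1 := by
  apply valT_inc t j d (dInc d j) hjt htm
  · intro k hk
    have hkm : k < m := by omega
    rw [dv, dif_pos hkm]
    rw [hlow ⟨k, hkm⟩ hk]
    rfl
  · rw [dv, dif_pos hj]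
    omega
  · intro k hk
    have hkm : k < m := by omega
    rw [dv, dif_pos hkm]
    simp [dInc, hk]
  · rw [dv, dv, dif_pos hj, dif_pos hj]
    simp only [dInc]
    rw [if_neg (by omega : ¬ (j < j)), if_pos (by trivial)]
    have hv : (d ⟨j, hj⟩).val < 3 := (d ⟨j, hj⟩).isLt
    rw [Fin.val_add]
    simp only [Fin.val_one]
    omega
  · intro k hk
    unfold dv
    by_cases hkm : k < m
    · rw [dif_pos hkm, dif_pos hkm]
      simp only [dInc]
      rw [if_neg (by omega : ¬ (k < j)), if_neg (by omega : ¬ (k = j))]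
    · rw [dif_neg hkm, dif_neg hkm]
end ValLemmas
section ImgLemmas
variable {m : ℕ}

lemma pimg_s_full : pimg (sF (m := m)) (ClsSet Bfull) = ClsSet (Bcfg (fun _ => 0)) := by
  simp only [sF]
  rw [pimg_bw]
  apply ClsSet_congr
  intro i y
  simp only [Bfull, Bcfg, Gs, true_and]
  by_cases hi : i.val + 1 = m
  · simp only [hi, eq_self_iff_true, true_and]
    revert y; decide
  · simp only [hi, false_and]
    simp only [if_false, false_and, or_false, Option.some.injEq]
    constructor
    · rintro ⟨x, hx⟩; exact hx.symm
    · intro hy; exact ⟨0, hy.symm⟩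

lemma pimg_s_cfg_low (d : Fin m → Fin 3)
    (hd : ∀ i : Fin m, i.val + 1 = m → ¬ (d i).val = 2) :
    pimg sF (ClsSet (Bcfg d)) = ClsSet (Bcfg (fun _ => 0)) := by
  simp only [sF]
  rw [pimg_bw]
  apply ClsSet_congr
  intro i y
  simp only [Bcfg, Gs]
  by_cases hi : i.val + 1 = m
  · have hc := hd i hi
    simp only [hi, eq_self_iff_true, true_and]
    revert hc
    generalize d i = c
    revert y c; decide
  · simp only [hi, false_and, or_false, if_false, Option.some.injEq]
    constructor
    · rintro ⟨x, _, hx⟩; exact hx.symm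
    · intro hy; exact ⟨d i, rfl, hy.symm⟩

lemma pimg_s_cfg_two (d : Fin m → Fin 3)
    (hd : ∀ i : Fin m, i.val + 1 = m → (d i).val = 2) :
    pimg sF (ClsSet (Bcfg d)) = ClsSet (Bdeg (fun _ => 0)) := by
  simp only [sF]
  rw [pimg_bw]
  apply ClsSet_congr
  intro i y
  simp only [Bcfg, Bdeg, Gs]
  by_cases hi : i.val + 1 = m
  · have hc := hd i hi
    simp only [hi, eq_self_iff_true, true_and]
    revert hc
    generalize d i = c
    revert y c; decide
  · simp only [hi, false_and, or_false, if_false, Option.some.injEq]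
    constructor
    · rintro ⟨x, _, hx⟩; exact hx.symm
    · intro hy; exact ⟨d i, rfl, hy.symm⟩

lemma pimg_s_deg (d : Fin m → Fin 3) :
    pimg sF (ClsSet (Bdeg d)) =
      ClsSet (Bdeg (fun i => if i.val + 1 = m ∧ ¬ (d i).val = 2 then d i else 0)) := by
  simp only [sF]
  rw [pimg_bw]
  apply ClsSet_congr
  intro i y
  simp only [Bdeg, Gs]
  constructor
  · rintro ⟨x, rfl, hx⟩
    simp only [Option.some.injEq] at hx
    exact hx.symm
  · intro hy
    exact ⟨d i, rfl, by rw [hy]⟩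

lemma pimg_inc_cfg (d : Fin m → Fin 3) (j : ℕ) (hj : j + 1 < m)
    (hlow : ∀ i : Fin m, i.val < j → d i = 2)
    (hdj : ∀ i : Fin m, i.val = j → ¬ (d i).val = 2) :
    pimg (incF j) (ClsSet (Bcfg d)) = ClsSet (Bcfg (dInc d j)) := by
  simp only [incF]
  rw [pimg_bw]
  apply ClsSet_congr
  intro i y
  simp only [Bcfg, Ginc, dInc]
  rcases lt_trichotomy i.val j with hij | hij | hij
  · have h2 := hlow i hij
    have hm' : ¬ (i.val + 1 = m) := by omega
    simp only [if_pos hij, hm', false_and, or_false, h2]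
    revert y; decide
  · have hm' : ¬ (i.val + 1 = m) := by omega
    have hc := hdj i hij
    simp only [if_neg (by omega : ¬ (i.val < j)), if_pos hij, hm', false_and, or_false]
    revert hc
    generalize d i = c
    revert y c; decide
  · simp only [if_neg (by omega : ¬ (i.val < j)), if_neg (by omega : ¬ (i.val = j)),
      Option.some.injEq]
    constructor
    · rintro ⟨x, hx, rfl⟩; exact hx
    · intro h; exact ⟨y, h, rfl⟩

lemma pimg_inc_deg (d : Fin m → Fin 3) (j : ℕ) (hj : j + 1 < m)
    (hlow : ∀ i : Fin m, i.val < j → d i = 2)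
    (hdj : ∀ i : Fin m, i.val = j → ¬ (d i).val = 2) :
    pimg (incF j) (ClsSet (Bdeg d)) = ClsSet (Bdeg (dInc d j)) := by
  simp only [incF]
  rw [pimg_bw]
  apply ClsSet_congr
  intro i y
  simp only [Bdeg, Ginc, dInc]
  rcases lt_trichotomy i.val j with hij | hij | hij
  · have h2 := hlow i hij
    simp only [if_pos hij, h2]
    revert y; decide
  · have hc := hdj i hij
    simp only [if_neg (by omega : ¬ (i.val < j)), if_pos hij]
    revert hc
    generalize d i = c
    revert y c; decide
  · simp only [if_neg (by omega : ¬ (i.val < j)), if_neg (by omega : ¬ (i.val = j)),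
      Option.some.injEq]
    constructor
    · rintro ⟨x, hx, rfl⟩; exact hx
    · intro h; exact ⟨y, h, rfl⟩

lemma pimg_r_cfg (d : Fin m → Fin 3)
    (hlow : ∀ i : Fin m, ¬ (i.val + 1 = m) → d i = 2) :
    pimg rF (ClsSet (Bcfg d)) = ClsSet (Bcfg (dInc d (m-1))) := by
  simp only [rF]
  rw [pimg_bw]
  apply ClsSet_congr
  intro i y
  simp only [Bcfg, Gr, dInc]
  by_cases hi : i.val + 1 = m
  · simp only [hi, eq_self_iff_true, true_and,
      if_neg (by omega : ¬ (i.val < m - 1)), if_pos (by omega : i.val = m - 1), if_pos hi]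
    generalize d i = c
    revert y c; decide
  · have h2 := hlow i hi
    simp only [hi, false_and, or_false, if_neg hi, if_pos (by omega : i.val < m - 1), h2]
    revert y; decide

lemma pimg_r_full (hm1 : m = 1) : pimg (rF (m := m)) (ClsSet Bfull) = ClsSet Bfull := by
  subst hm1
  simp only [rF]
  rw [pimg_bw]
  apply ClsSet_congr
  intro i y
  simp only [Bfull, Gr, true_and, iff_true]
  have hi : i.val + 1 = 1 := by omega
  refine ⟨y + 2, ?_⟩
  rw [if_pos hi]
  congr 1
  revert y; decide

lemma pimg_sing (g : PS m → Option (PS m)) (a b : PS m) (h : g a = some b) :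
    pimg g {a} = {b} := by
  ext c
  simp only [pimg, Set.mem_setOf_eq, Set.mem_singleton_iff]
  constructor
  · rintro ⟨a', rfl, hg⟩
    rw [h] at hg
    exact (Option.some.injEq _ _ ▸ hg).symm ▸ rfl
  · rintro rfl
    exact ⟨a, rfl, h⟩

lemma pimg_const {S : Set (PS m)} {g : PS m → Option (PS m)} {q0 : PS m}
    (hall : ∀ p ∈ S, g p = some q0 ∨ g p = none)
    (hdef : ∀ p ∈ S, ∃ b, g p = some b)
    (hne : ∃ p, p ∈ S) :
    pimg g S = {q0} := by
  ext c
  simp only [pimg, Set.mem_setOf_eq, Set.mem_singleton_iff]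
  constructor
  · rintro ⟨a, ha, hg⟩
    rcases hall a ha with h | h
    · rw [h] at hg; exact (Option.some.injEq _ _ ▸ hg).symm
    · rw [h] at hg; exact absurd hg (by simp)
  · rintro rfl
    obtain ⟨p, hp⟩ := hne
    obtain ⟨b, hb⟩ := hdef p hp
    rcases hall p hp with h | h
    · exact ⟨p, hp, h⟩
    · rw [h] at hb; exact absurd hb (by simp)

lemma ClsSet_deg_m1 (hm1 : m = 1) (d : Fin m → Fin 3) (hm : 0 < m) :
    ClsSet (Bdeg d) = {((⟨0, hm⟩ : Fin m), d ⟨0, hm⟩)} := by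
  subst hm1
  ext ⟨i, x⟩
  simp only [ClsSet, Bdeg, Set.mem_setOf_eq, Set.mem_singleton_iff, Prod.mk.injEq]
  have : i = ⟨0, hm⟩ := by
    apply Fin.ext; omega
  subst this
  simp

end ImgLemmas
section LB
variable {m : ℕ}

inductive Good (hm : 0 < m) : Set (PS m) → ℕ → Prop where
  | full : Good hm (ClsSet Bfull) (3 ^ m + 1)
  | cfg (d : Fin m → Fin 3) : Good hm (ClsSet (Bcfg d)) (3 ^ m - valT m d)
  | deg (d : Fin m → Fin 3) (h2 : 2 ≤ m) : Good hm (ClsSet (Bdeg d)) (3 ^ (m-1) - valT (m-1) d)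
  | sing (a : PS m) : Good hm {a} 0

lemma mem_Ab {hm : 0 < m} {g : PS m → Option (PS m)} (h : g ∈ Ab hm) :
    g = sF ∨ g = rF ∨ g = fF hm ∨ ∃ j, j < m - 1 ∧ g = incF j := by
  simp only [Ab, Finset.mem_insert, Finset.mem_image, Finset.mem_range] at h
  rcases h with h | h | h | ⟨j, hj, h⟩
  · exact Or.inl h
  · exact Or.inr (Or.inl h)
  · exact Or.inr (Or.inr (Or.inl h))
  · exact Or.inr (Or.inr (Or.inr ⟨j, hj, h.symm⟩))

lemma fin3_of_val2 : ∀ c : Fin 3, c.val = 2 → c = 2 := by decide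
lemma fin3_ne_succ : ∀ c : Fin 3, ¬ c = c + 1 := by decide
lemma fin3_f : ∀ c : Fin 3, ¬ c.val = 1 → ¬ (c + 1).val = 1 → c.val = 2 := by decide

lemma valT_const0 (t : ℕ) : valT t (fun _ : Fin m => (0 : Fin 3)) = 0 :=
  valT_zero _ _ (fun k _ => by simp [dv])

theorem lb (hm : 0 < m) (w : List (PS m → Option (PS m))) (hw : ∀ g ∈ w, g ∈ Ab hm)
    (S : Set (PS m)) (k : ℕ) (hG : Good hm S k) (hs : SyncW w S) : k ≤ w.length := by
  induction w generalizing S k with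
  | nil =>
    obtain ⟨b0, hb⟩ := hs
    cases hG with
    | full =>
      exfalso
      have h1 := hb (⟨0, hm⟩, 0) trivial
      have h2 := hb (⟨0, hm⟩, 1) trivial
      simp only [pApply, List.foldl_nil] at h1 h2
      have h3 := Option.some_injective _ (h1.trans h2.symm)
      have h4 : (0 : Fin 3) = 1 := congrArg Prod.snd h3
      exact absurd h4 (by decide)
    | cfg d =>
      exfalso
      have hmem1 : ((⟨m-1, by omega⟩ : Fin m), d ⟨m-1, by omega⟩) ∈ ClsSet (Bcfg d) :=
        Or.inl rfl
      have hmem2 : ((⟨m-1, by omega⟩ : Fin m), d ⟨m-1, by omega⟩ + 1) ∈ ClsSet (Bcfg d) :=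
        Or.inr ⟨by simp; omega, rfl⟩
      have h1 := hb _ hmem1
      have h2 := hb _ hmem2
      simp only [pApply, List.foldl_nil] at h1 h2
      have h3 := Option.some_injective _ (h1.trans h2.symm)
      have h4 := congrArg Prod.snd h3
      exact fin3_ne_succ _ h4
    | deg d h2 =>
      exfalso
      have hmem1 : ((⟨0, hm⟩ : Fin m), d ⟨0, hm⟩) ∈ ClsSet (Bdeg d) := rfl
      have hmem2 : ((⟨m-1, by omega⟩ : Fin m), d ⟨m-1, by omega⟩) ∈ ClsSet (Bdeg d) := rfl
      have h1 := hb _ hmem1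
      have h2 := hb _ hmem2
      simp only [pApply, List.foldl_nil] at h1 h2
      have h3 := Option.some_injective _ (h1.trans h2.symm)
      have h4 := congrArg (fun p : PS m => p.1.val) h3
      simp only at h4
      omega
    | sing a => exact Nat.zero_le _
  | cons g w ih =>
    have hg := hw g List.mem_cons_self
    have hw' : ∀ g' ∈ w, g' ∈ Ab hm := fun g' h => hw g' (List.mem_cons_of_mem _ h)
    obtain ⟨hdef, hs'⟩ := syncW_cons hs
    cases hG with
    | sing a => exact Nat.zero_le _
    | full =>
      rcases mem_Ab hg with rfl | rfl | rfl | ⟨j, hj, rfl⟩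
      · rw [pimg_s_full] at hs'
        have h1 := ih hw' _ _ (Good.cfg (fun _ => 0)) hs'
        rw [valT_const0] at h1
        simp only [List.length_cons]
        omega
      · by_cases hm1 : m = 1
        · rw [pimg_r_full hm1] at hs'
          have h1 := ih hw' _ _ Good.full hs'
          simp only [List.length_cons]
          omega
        · exfalso
          obtain ⟨b, hb⟩ := hdef (⟨0, hm⟩, 0) trivial
          simp [rF, bw, Gr, show ¬((0:ℕ) + 1 = m) by omega] at hb
      · exfalso
        obtain ⟨b, hb⟩ := hdef (⟨m-1, by omega⟩, 1) trivial
        simp [fF, show m - 1 + 1 = m by omega] at hb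
      · exfalso
        obtain ⟨b, hb⟩ := hdef (⟨j, by omega⟩, 2) trivial
        simp [incF, bw, Ginc] at hb
    | cfg d =>
      rcases mem_Ab hg with rfl | rfl | rfl | ⟨j, hj, rfl⟩
      · -- sF
        by_cases hd2 : ∀ i : Fin m, i.val + 1 = m → (d i).val = 2
        · have hval : 2 * 3 ^ (m-1) ≤ valT m d := by
            apply valT_top d hm
            rw [dv, dif_pos (by omega : m - 1 < m)]
            exact hd2 _ (by simp; omega)
          by_cases hm1 : m = 1
          · rw [pimg_s_cfg_two d hd2, ClsSet_deg_m1 hm1 _ hm] at hs'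
            have h1 := ih hw' _ _ (Good.sing _) hs'
            have hp : (3:ℕ) ^ m = 3 := by rw [hm1]; norm_num
            have hp1 : (3:ℕ) ^ (m-1) = 1 := by rw [hm1]; norm_num
            simp only [List.length_cons]
            omega
          · have h2m : 2 ≤ m := by omega
            rw [pimg_s_cfg_two d hd2] at hs'
            have h1 := ih hw' _ _ (Good.deg (fun _ => 0) h2m) hs'
            rw [valT_const0] at h1
            have hpow : (3:ℕ) ^ m = 3 * 3 ^ (m-1) := by
              conv_lhs => rw [show m = (m-1)+1 by omega]
              rw [pow_succ, mul_comm]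
            simp only [List.length_cons]
            omega
        · push_neg at hd2
          obtain ⟨i0, hi0, hv0⟩ := hd2
          have hdlow : ∀ i : Fin m, i.val + 1 = m → ¬ (d i).val = 2 := by
            intro i hi
            have hii : i = i0 := Fin.ext (by omega)
            rw [hii]; exact hv0
          rw [pimg_s_cfg_low d hdlow] at hs'
          have h1 := ih hw' _ _ (Good.cfg (fun _ => 0)) hs'
          rw [valT_const0] at h1
          simp only [List.length_cons]
          omega
      · -- rF
        have hlow : ∀ i : Fin m, ¬ (i.val + 1 = m) → d i = 2 := by
          intro i hi
          obtain ⟨b, hb⟩ := hdef (i, d i) (Or.inl rfl)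
          by_contra hne
          have hnv : ¬ (d i).val = 2 := fun h => hne (fin3_of_val2 _ h)
          simp [rF, bw, Gr, hi, hnv] at hb
        by_cases hd2 : (d ⟨m-1, by omega⟩).val = 2
        · have hall : valT m d + 1 = 3 ^ m := by
            apply valT_all2 m d le_rfl
            intro k hk
            rw [dv, dif_pos hk]
            by_cases hkl : k + 1 = m
            · have hkk : (⟨k, hk⟩ : Fin m) = ⟨m-1, by omega⟩ := Fin.ext (by simp; omega)
              rw [hkk]; exact hd2
            · rw [hlow ⟨k, hk⟩ (by simpa using hkl)]; rfl
          simp only [List.length_cons]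
          omega
        · rw [pimg_r_cfg d hlow] at hs'
          have h1 := ih hw' _ _ (Good.cfg (dInc d (m-1))) hs'
          have hv := valT_dInc d (m-1) (by omega) (fun i hi => hlow i (by omega)) hd2 m
            (by omega) le_rfl
          rw [hv] at h1
          simp only [List.length_cons]
          omega
      · -- fF
        have hlow : ∀ i : Fin m, ¬ (i.val + 1 = m) → d i = 2 := by
          intro i hi
          obtain ⟨b, hb⟩ := hdef (i, d i) (Or.inl rfl)
          by_contra hne
          have hnv : ¬ (d i).val = 2 := fun h => hne (fin3_of_val2 _ h)
          simp [fF, hi, hnv] at hb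
        have hd2 : (d ⟨m-1, by omega⟩).val = 2 := by
          obtain ⟨b1, hb1⟩ := hdef (⟨m-1, by omega⟩, d ⟨m-1, by omega⟩) (Or.inl rfl)
          obtain ⟨b2, hb2⟩ := hdef (⟨m-1, by omega⟩, d ⟨m-1, by omega⟩ + 1)
            (Or.inr ⟨by simp; omega, rfl⟩)
          apply fin3_f
          · intro h1
            simp [fF, show m - 1 + 1 = m by omega, h1] at hb1
          · intro h1
            simp [fF, show m - 1 + 1 = m by omega, h1] at hb2
        have hall : valT m d + 1 = 3 ^ m := by
          apply valT_all2 m d le_rfl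
          intro k hk
          rw [dv, dif_pos hk]
          by_cases hkl : k + 1 = m
          · have hkk : (⟨k, hk⟩ : Fin m) = ⟨m-1, by omega⟩ := Fin.ext (by simp; omega)
            rw [hkk]; exact hd2
          · rw [hlow ⟨k, hk⟩ (by simpa using hkl)]; rfl
        simp only [List.length_cons]
        omega
      · -- incF j
        have hlow : ∀ i : Fin m, i.val < j → d i = 2 := by
          intro i hij
          obtain ⟨b, hb⟩ := hdef (i, d i) (Or.inl rfl)
          by_contra hne
          have hnv : ¬ (d i).val = 2 := fun h => hne (fin3_of_val2 _ h)
          simp [incF, bw, Ginc, hij, hnv] at hb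
        have hdj : ∀ i : Fin m, i.val = j → ¬ (d i).val = 2 := by
          intro i hij hv2
          obtain ⟨b, hb⟩ := hdef (i, d i) (Or.inl rfl)
          simp [incF, bw, Ginc, hij, hv2] at hb
        rw [pimg_inc_cfg d j (by omega) hlow hdj] at hs'
        have h1 := ih hw' _ _ (Good.cfg (dInc d j)) hs'
        have hv := valT_dInc d j (by omega) hlow (hdj ⟨j, by omega⟩ rfl) m (by omega) le_rfl
        rw [hv] at h1
        simp only [List.length_cons]
        omega
    | deg d h2 =>
      rcases mem_Ab hg with rfl | rfl | rfl | ⟨j, hj, rfl⟩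
      · rw [pimg_s_deg d] at hs'
        have h1 := ih hw' _ _ (Good.deg _ h2) hs'
        have h0 : valT (m-1)
            (fun i : Fin m => if i.val + 1 = m ∧ ¬ (d i).val = 2 then d i else 0) = 0 := by
          apply valT_zero
          intro k hk
          rw [dv]
          split
          · next hkm =>
            rw [if_neg]
            · rfl
            · rintro ⟨h1, -⟩
              have hvk : (⟨k, hkm⟩ : Fin m).val = k := rfl
              omega
          · rfl
        rw [h0] at h1
        simp only [List.length_cons]
        omega
      · -- rF on deg
        have hlow : ∀ i : Fin m, ¬ (i.val + 1 = m) → d i = 2 := by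
          intro i hi
          obtain ⟨b, hb⟩ := hdef (i, d i) rfl
          by_contra hne
          have hnv : ¬ (d i).val = 2 := fun h => hne (fin3_of_val2 _ h)
          simp [rF, bw, Gr, hi, hnv] at hb
        have hall : valT (m-1) d + 1 = 3 ^ (m-1) := by
          apply valT_all2 (m-1) d (by omega)
          intro k hk
          rw [dv, dif_pos (by omega : k < m)]
          rw [hlow ⟨k, by omega⟩ (by simp; omega)]; rfl
        simp only [List.length_cons]
        omega
      · -- fF on deg
        have hlow : ∀ i : Fin m, ¬ (i.val + 1 = m) → d i = 2 := by
          intro i hi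
          obtain ⟨b, hb⟩ := hdef (i, d i) rfl
          by_contra hne
          have hnv : ¬ (d i).val = 2 := fun h => hne (fin3_of_val2 _ h)
          simp [fF, hi, hnv] at hb
        have hall : valT (m-1) d + 1 = 3 ^ (m-1) := by
          apply valT_all2 (m-1) d (by omega)
          intro k hk
          rw [dv, dif_pos (by omega : k < m)]
          rw [hlow ⟨k, by omega⟩ (by simp; omega)]; rfl
        simp only [List.length_cons]
        omega
      · -- incF j on deg
        have hlow : ∀ i : Fin m, i.val < j → d i = 2 := by
          intro i hij
          obtain ⟨b, hb⟩ := hdef (i, d i) rfl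
          by_contra hne
          have hnv : ¬ (d i).val = 2 := fun h => hne (fin3_of_val2 _ h)
          simp [incF, bw, Ginc, hij, hnv] at hb
        have hdj : ∀ i : Fin m, i.val = j → ¬ (d i).val = 2 := by
          intro i hij hv2
          obtain ⟨b, hb⟩ := hdef (i, d i) rfl
          simp [incF, bw, Ginc, hij, hv2] at hb
        rw [pimg_inc_deg d j (by omega) hlow hdj] at hs'
        have h1 := ih hw' _ _ (Good.deg (dInc d j) h2) hs'
        have hv := valT_dInc d j (by omega) hlow (hdj ⟨j, by omega⟩ rfl) (m-1)
          (by omega) (by omega)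
        rw [hv] at h1
        simp only [List.length_cons]
        omega

end LB
section Exist
variable {m : ℕ}

lemma pApply_singleton {β : Type*} (g : β → Option β) (b : β) : pApply [g] b = g b := by
  rw [pApply_cons]; cases g b <;> rfl

lemma sF_mem (hm : 0 < m) : sF ∈ Ab hm := by simp [Ab]
lemma rF_mem (hm : 0 < m) : rF ∈ Ab hm := by simp [Ab]
lemma fF_mem (hm : 0 < m) : fF hm ∈ Ab hm := by simp [Ab]
lemma incF_mem (hm : 0 < m) {j : ℕ} (hj : j < m - 1) : incF j ∈ Ab hm := by
  simp only [Ab, Finset.mem_insert, Finset.mem_image, Finset.mem_range]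
  exact Or.inr (Or.inr (Or.inr ⟨j, hj, rfl⟩))

lemma fin3_ne2 : ∀ c : Fin 3, ¬ c = 2 → ¬ c.val = 2 := by decide
lemma fin3_two_val : ((2 : Fin 3)).val = 2 := rfl
lemma fin3_succ2_ne1 : ¬ ((2 : Fin 3) + 1).val = 1 := by decide

lemma sync_f (hm : 0 < m) (d : Fin m → Fin 3) (hall : ∀ i : Fin m, (d i).val = 2) :
    SyncW [fF hm] (ClsSet (Bcfg d)) := by
  refine ⟨(⟨0, hm⟩, 0), ?_⟩
  rintro ⟨i, x⟩ hmem
  dsimp only [ClsSet, Bcfg, Set.mem_setOf_eq] at hmem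
  rw [pApply_singleton]
  have hd2 : d i = 2 := fin3_of_val2 _ (hall i)
  rcases hmem with hx | ⟨hi, hx⟩
  · -- x = d i = 2
    rw [fF, if_pos]
    by_cases hi : i.val + 1 = m
    · exact Or.inl ⟨hi, by simp only at hx ⊢; rw [hx, hd2]; decide⟩
    · exact Or.inr ⟨hi, by simp only at hx ⊢; rw [hx, hd2]; decide⟩
  · rw [fF, if_pos]
    exact Or.inl ⟨hi, by simp only at hx ⊢; rw [hx, hd2]; decide⟩

lemma def_r_cfg (d : Fin m → Fin 3) (hlow : ∀ i : Fin m, ¬ (i.val + 1 = m) → d i = 2) :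
    ∀ p ∈ ClsSet (Bcfg d), ∃ b, rF p = some b := by
  rintro ⟨i, x⟩ hmem
  dsimp only [ClsSet, Bcfg, Set.mem_setOf_eq] at hmem
  by_cases hi : i.val + 1 = m
  · exact ⟨(i, x + 1), by simp [rF, bw, Gr, hi]⟩
  · have hx : x = d i := by
      rcases hmem with hx | ⟨hi', _⟩
      · exact hx
      · exact absurd hi' hi
    refine ⟨(i, 0), ?_⟩
    simp [rF, bw, Gr, hi, hx, hlow i hi]

lemma def_inc_cfg (d : Fin m → Fin 3) (j : ℕ) (hj : j + 1 < m)
    (hlow : ∀ i : Fin m, i.val < j → d i = 2)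
    (hdj : ∀ i : Fin m, i.val = j → ¬ (d i).val = 2) :
    ∀ p ∈ ClsSet (Bcfg d), ∃ b, incF j p = some b := by
  rintro ⟨i, x⟩ hmem
  dsimp only [ClsSet, Bcfg, Set.mem_setOf_eq] at hmem
  rcases lt_trichotomy i.val j with hij | hij | hij
  · have hx : x = d i := by
      rcases hmem with hx | ⟨hi', _⟩
      · exact hx
      · exact absurd hi' (by dsimp only; omega)
    refine ⟨(i, 0), ?_⟩
    simp [incF, bw, Ginc, hij, hx, hlow i hij]
  · have hx : x = d i := by
      rcases hmem with hx | ⟨hi', _⟩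
      · exact hx
      · exact absurd hi' (by dsimp only; omega)
    have hcv := hdj i hij
    have hex : ∀ c : Fin 3, ¬ c.val = 2 →
        ∃ y, (if c.val = 0 then some (1:Fin 3) else if c.val = 1 then some 2 else none) = some y := by
      decide
    obtain ⟨y, hy⟩ := hex (d i) hcv
    refine ⟨(i, y), ?_⟩
    simp only [incF, bw, Ginc, if_neg (by omega : ¬ (i.val < j)), if_pos hij, hx, hy,
      Option.map_some]
  · refine ⟨(i, x), ?_⟩
    simp only [incF, bw, Ginc]
    rw [if_neg (by omega : ¬ (i.val < j)), if_neg (by omega : ¬ (i.val = j))]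
    rfl

lemma exists_sync_cfg (hm : 0 < m) : ∀ K (d : Fin m → Fin 3), 3 ^ m ≤ valT m d + K + 1 →
    ∃ w : List (PS m → Option (PS m)), (∀ g ∈ w, g ∈ Ab hm) ∧ SyncW w (ClsSet (Bcfg d)) := by
  intro K
  induction K with
  | zero =>
    intro d hK
    have hall : ∀ i : Fin m, (d i).val = 2 := by
      by_contra hcon
      push_neg at hcon
      obtain ⟨i, hi⟩ := hcon
      have hdvi : dv d i.val ≤ 1 := by
        rw [dv, dif_pos i.isLt]
        simp only [Fin.eta]
        have := (d i).isLt
        omega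
      have := valT_lt d i.val i.isLt hdvi
      omega
    exact ⟨[fF hm], by simpa using fF_mem hm, sync_f hm d hall⟩
  | succ K ihK =>
    intro d hK
    by_cases hall : ∀ i : Fin m, (d i).val = 2
    · exact ⟨[fF hm], by simpa using fF_mem hm, sync_f hm d hall⟩
    · push_neg at hall
      have hex : ∃ t : ℕ, ∃ h : t < m, ¬ (d ⟨t, h⟩).val = 2 := by
        obtain ⟨i, hi⟩ := hall
        exact ⟨i.val, i.isLt, by simpa only [Fin.eta] using hi⟩
      have hjm := (Nat.find_spec hex).1
      have hdj : ¬ (d ⟨Nat.find hex, hjm⟩).val = 2 := (Nat.find_spec hex).2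
      set j := Nat.find hex with hjdef
      have hlow : ∀ i : Fin m, i.val < j → d i = 2 := by
        intro i hij
        by_contra hne
        exact Nat.find_min hex hij ⟨i.isLt, by simpa only [Fin.eta] using fin3_ne2 _ hne⟩
      by_cases hjtop : j + 1 = m
      · have hlow' : ∀ i : Fin m, ¬ (i.val + 1 = m) → d i = 2 := fun i hi => hlow i (by omega)
        have himg := pimg_r_cfg d hlow'
        have hdj' : ¬ (d ⟨m - 1, by omega⟩).val = 2 := by
          have : (⟨m - 1, by omega⟩ : Fin m) = ⟨j, hjm⟩ := Fin.ext (by simp; omega)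
          rw [this]; exact hdj
        have hv := valT_dInc d (m-1) (by omega) (fun i hi => hlow i (by omega)) hdj' m
          (by omega) le_rfl
        obtain ⟨w', hw', hs'⟩ := ihK (dInc d (m-1)) (by omega)
        refine ⟨rF :: w', ?_, syncW_cons' ?_ hs'⟩
        · intro g hgm
          rcases List.mem_cons.1 hgm with rfl | hgm
          · exact rF_mem hm
          · exact hw' g hgm
        · intro p hp
          obtain ⟨b, hb⟩ := def_r_cfg d hlow' p hp
          exact ⟨b, hb, by rw [← himg]; exact ⟨p, hp, hb⟩⟩
      · have hjlt : j + 1 < m := by omega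
        have hdj' : ∀ i : Fin m, i.val = j → ¬ (d i).val = 2 := by
          intro i hij
          have : i = ⟨j, hjm⟩ := Fin.ext hij
          rw [this]; exact hdj
        have himg := pimg_inc_cfg d j hjlt hlow hdj'
        have hv := valT_dInc d j (by omega) hlow hdj m (by omega) le_rfl
        obtain ⟨w', hw', hs'⟩ := ihK (dInc d j) (by omega)
        refine ⟨incF j :: w', ?_, syncW_cons' ?_ hs'⟩
        · intro g hgm
          rcases List.mem_cons.1 hgm with rfl | hgm
          · exact incF_mem hm (by omega)
          · exact hw' g hgm
        · intro p hp
          obtain ⟨b, hb⟩ := def_inc_cfg d j hjlt hlow hdj' p hp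
          exact ⟨b, hb, by rw [← himg]; exact ⟨p, hp, hb⟩⟩

lemma exists_sync_full (hm : 0 < m) :
    ∃ w : List (PS m → Option (PS m)),
      (∀ g ∈ w, g ∈ Ab hm) ∧ SyncW w (ClsSet (Bfull (m := m))) := by
  obtain ⟨w', hw', hs'⟩ := exists_sync_cfg hm (3 ^ m) (fun _ => 0)
    (by rw [valT_const0]; omega)
  refine ⟨sF :: w', ?_, syncW_cons' ?_ hs'⟩
  · intro g hgm
    rcases List.mem_cons.1 hgm with rfl | hgm
    · exact sF_mem hm
    · exact hw' g hgm
  · intro p hp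
    refine ⟨(p.1, if p.1.val + 1 = m ∧ ¬ p.2.val = 2 then p.2 else 0), by simp [sF, bw, Gs], ?_⟩
    rw [← pimg_s_full]
    exact ⟨p, hp, by simp [sF, bw, Gs]⟩

end Exist
section Card
variable {m : ℕ}

lemma incF_at_self (j : ℕ) (hj : j < m) :
    incF (m := m) j ((⟨j, hj⟩ : Fin m), 2) = none := by
  simp only [incF, bw, Ginc]
  rw [if_neg (by omega : ¬ (j < j))]
  rfl

lemma incF_at_zero (j : ℕ) (hj : j < m) :
    incF (m := m) j ((⟨j, hj⟩ : Fin m), 0) = some (⟨j, hj⟩, 1) := by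
  simp only [incF, bw, Ginc]
  rw [if_neg (by omega : ¬ (j < j))]
  rfl

lemma sF_ne_rF (hm : 0 < m) : sF (m := m) ≠ rF := by
  intro h
  have h0 := congrFun h (⟨0, hm⟩, 0)
  simp only [sF, rF, bw, Gs, Gr] at h0
  by_cases h1 : (0:ℕ) + 1 = m
  · rw [if_pos h1] at h0
    have h2 : (if ((⟨0,hm⟩ : Fin m).val + 1 = m ∧ ¬ ((0:Fin 3)).val = 2) then (0:Fin 3) else 0) = 0 :=
      ite_self _
    rw [h2] at h0
    simp only [Option.map_some, Option.some.injEq, Prod.mk.injEq] at h0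
    exact absurd h0.2 (by decide)
  · rw [if_neg h1, if_neg (by decide : ¬ ((0:Fin 3)).val = 2)] at h0
    have h2 : (if ((⟨0,hm⟩ : Fin m).val + 1 = m ∧ ¬ ((0:Fin 3)).val = 2) then (0:Fin 3) else 0) = 0 :=
      ite_self _
    rw [h2] at h0
    simp at h0

lemma fF_at_one (hm : 0 < m) (i : Fin m) : fF hm (i, 1) = none := by
  rw [fF, if_neg]
  rintro (⟨-, h⟩ | ⟨-, h⟩)
  · exact h rfl
  · exact (by decide : ¬ ((1:Fin 3)).val = 2) h

lemma sF_ne_fF (hm : 0 < m) : sF (m := m) ≠ fF hm := by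
  intro h
  have h0 := congrFun h (⟨0, hm⟩, 1)
  rw [fF_at_one] at h0
  simp [sF, bw, Gs] at h0

lemma rF_ne_fF (hm : 0 < m) : rF (m := m) ≠ fF hm := by
  intro h
  by_cases hm1 : m = 1
  · have h0 := congrFun h (⟨0, hm⟩, 0)
    have h1 : (0:ℕ) + 1 = m := by omega
    simp only [rF, bw, Gr] at h0
    rw [if_pos h1] at h0
    rw [fF, if_pos (Or.inl ⟨h1, (by decide : ¬ ((0:Fin 3)).val = 1)⟩)] at h0
    simp only [Option.map_some, Option.some.injEq, Prod.mk.injEq] at h0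
    exact absurd h0.2 (by decide)
  · have h0 := congrFun h (⟨1, by omega⟩, 2)
    have hf : fF hm ((⟨1, by omega⟩ : Fin m), 2) = some (⟨0, hm⟩, 0) := by
      rw [fF, if_pos]
      by_cases h2 : (1:ℕ) + 1 = m
      · exact Or.inl ⟨h2, (by decide : ¬ ((2:Fin 3)).val = 1)⟩
      · exact Or.inr ⟨h2, (by decide : ((2:Fin 3)).val = 2)⟩
    rw [hf] at h0
    simp only [rF, bw, Gr] at h0
    by_cases h2 : (1:ℕ) + 1 = m
    · rw [if_pos h2] at h0
      simp only [Option.map_some, Option.some.injEq, Prod.mk.injEq] at h0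
      have := congrArg Fin.val h0.1
      simp at this
    · rw [if_neg h2, if_pos (by decide : ((2:Fin 3)).val = 2)] at h0
      simp only [Option.map_some, Option.some.injEq, Prod.mk.injEq] at h0
      have := congrArg Fin.val h0.1
      simp at this

lemma sF_ne_incF (j : ℕ) (hj : j < m) : sF (m := m) ≠ incF j := by
  intro h
  have h0 := congrFun h (⟨j, hj⟩, 2)
  rw [incF_at_self j hj] at h0
  simp [sF, bw, Gs] at h0

lemma rF_ne_incF (j : ℕ) (hj : j + 1 < m) : rF (m := m) ≠ incF j := by
  intro h
  have h0 := congrFun h (⟨j, by omega⟩, 0)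
  rw [incF_at_zero j (by omega)] at h0
  simp only [rF, bw, Gr] at h0
  rw [if_neg (by omega : ¬ (j + 1 = m)), if_neg (by decide : ¬ ((0:Fin 3)).val = 2)] at h0
  simp at h0

lemma fF_ne_incF (hm : 0 < m) (j : ℕ) (hj : j + 1 < m) : fF hm ≠ incF j := by
  intro h
  have h0 := congrFun h (⟨j, by omega⟩, 0)
  rw [incF_at_zero j (by omega)] at h0
  rw [fF, if_neg] at h0
  · simp at h0
  · rintro (⟨h1, -⟩ | ⟨-, h1⟩)
    · simp at h1; omega
    · exact (by decide : ¬ ((0:Fin 3)).val = 2) h1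

lemma incF_injOn (j k : ℕ) (hj : j < m) (hk : k < m) (h : incF (m := m) j = incF k) :
    j = k := by
  by_contra hne
  rcases Nat.lt_or_ge j k with hlt | hge
  · have h0 := congrFun h (⟨j, hj⟩, 0)
    rw [incF_at_zero j hj] at h0
    simp only [incF, bw, Ginc] at h0
    rw [if_pos hlt] at h0
    rw [if_neg (by decide : ¬ ((0:Fin 3)).val = 2)] at h0
    simp at h0
  · have hlt : k < j := by omega
    have h0 := congrFun h (⟨k, hk⟩, 0)
    rw [incF_at_zero k hk] at h0
    simp only [incF, bw, Ginc] at h0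
    rw [if_pos hlt] at h0
    rw [if_neg (by decide : ¬ ((0:Fin 3)).val = 2)] at h0
    simp at h0

lemma Ab_card (hm : 0 < m) : (Ab hm).card = m + 2 := by
  rw [Ab]
  rw [Finset.card_insert_of_notMem, Finset.card_insert_of_notMem,
    Finset.card_insert_of_notMem, Finset.card_image_of_injOn, Finset.card_range]
  · omega
  · intro j hjm k hkm hjk
    rw [Finset.mem_coe, Finset.mem_range] at hjm hkm
    exact incF_injOn j k (by omega) (by omega) hjk
  · simp only [Finset.mem_image, Finset.mem_range, not_exists]
    intro j
    rintro ⟨hj, hh⟩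
    exact fF_ne_incF hm j (by omega) hh.symm
  · simp only [Finset.mem_insert, Finset.mem_image, Finset.mem_range, not_or, not_exists]
    refine ⟨rF_ne_fF hm, ?_⟩
    intro j
    rintro ⟨hj, hh⟩
    exact rF_ne_incF j (by omega) hh.symm
  · simp only [Finset.mem_insert, Finset.mem_image, Finset.mem_range, not_or, not_exists]
    refine ⟨sF_ne_rF hm, sF_ne_fF hm, ?_⟩
    intro j
    rintro ⟨hj, hh⟩
    exact sF_ne_incF j (by omega) hh.symm

end Card
end CarHelper
/-- For every `n ≥ 3` divisible by `3`, there is an alphabet of `n / 3 + 2` partial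
transformations of an `n`-element set admitting a carefully synchronising word, all of whose
carefully synchronising words have length at least `3 ^ (n / 3) + 1`. -/
theorem car_lower_bound_linear_alphabet (n : ℕ) (hn : 3 ≤ n) (hdvd : 3 ∣ n) :
    ∃ A : Finset (Fin n → Option (Fin n)),
      A.card = n / 3 + 2 ∧
      (∃ w, CarefullySync A w) ∧
      (∀ w, CarefullySync A w → 3 ^ (n / 3) + 1 ≤ w.length) := by
  obtain ⟨m, rfl⟩ := hdvd
  have hm : 0 < m := by omega
  have hn3 : 3 * m / 3 = m := Nat.mul_div_cancel_left m (by norm_num)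
  have hcard : Fintype.card (CarHelper.PS m) = 3 * m := by
    simp [CarHelper.PS, mul_comm]
  let e : CarHelper.PS m ≃ Fin (3 * m) := Fintype.equivFinOfCardEq hcard
  refine ⟨(CarHelper.Ab hm).image (CarHelper.conjE e), ?_, ?_, ?_⟩
  · rw [Finset.card_image_of_injective _ (CarHelper.conjE_injective e),
      CarHelper.Ab_card hm, hn3]
  · obtain ⟨wa, hwa, ⟨a0, ha0⟩⟩ := CarHelper.exists_sync_full hm
    refine ⟨wa.map (CarHelper.conjE e), ?_, ⟨e a0, ?_⟩⟩
    · intro g hgm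
      rw [List.mem_map] at hgm
      obtain ⟨g', hg', rfl⟩ := hgm
      exact Finset.mem_image_of_mem _ (hwa g' hg')
    · intro q
      have h1 : ptApply (wa.map (CarHelper.conjE e)) q
          = CarHelper.pApply (wa.map (CarHelper.conjE e)) q := rfl
      rw [h1, show q = e (e.symm q) by simp, CarHelper.pApply_map_conjE]
      rw [ha0 (e.symm q) trivial]
      rfl
  · intro w hw
    obtain ⟨hletters, q0, hq0⟩ := hw
    set wa := w.map (CarHelper.conjE e.symm) with hwadef
    have hback : ∀ g ∈ w, ∃ g' ∈ CarHelper.Ab hm, g = CarHelper.conjE e g' := by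
      intro g hg
      obtain ⟨g', hg', hgg⟩ := Finset.mem_image.1 (hletters g hg)
      exact ⟨g', hg', hgg.symm⟩
    have hwa_letters : ∀ g ∈ wa, g ∈ CarHelper.Ab hm := by
      intro g hg
      rw [hwadef, List.mem_map] at hg
      obtain ⟨g0, hg0, rfl⟩ := hg
      obtain ⟨g', hg', rfl⟩ := hback g0 hg0
      rw [CarHelper.conjE_symm_conjE]
      exact hg'
    have hsync : CarHelper.SyncW wa (CarHelper.ClsSet (CarHelper.Bfull (m := m))) := by
      refine ⟨e.symm q0, ?_⟩
      intro a _
      have h2 := CarHelper.pApply_map_conjE e.symm w (e a)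
      rw [Equiv.symm_apply_apply] at h2
      rw [hwadef, h2, show CarHelper.pApply w (e a) = ptApply w (e a) from rfl, hq0 (e a)]
      rfl
    have hlen := CarHelper.lb hm wa hwa_letters _ _ CarHelper.Good.full hsync
    rw [hwadef, List.length_map] at hlen
    rw [hn3]
    exact hlen
end

section
/- For every natural number n ≥ 9 with n ≡ 4 (mod 5), there exist a set A of 2 partial transformations of an n-element set and a partial transformation f expressed by some nonempty word over A such that the depth of f with respect to A is at least 4^((n−4)/5); consequently the maximum diameter of a set of 2 partial transformations of an n-element set is at least 4^((n−4)/5). -/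
/-- A nonempty word `w` over the alphabet `A` expresses the partial transformation `f`. -/
def Expresses {n : ℕ} (A : Finset (Fin n → Option (Fin n)))
    (w : List (Fin n → Option (Fin n))) (f : Fin n → Option (Fin n)) : Prop :=
  w ≠ [] ∧ (∀ g ∈ w, g ∈ A) ∧ (fun q => ptApply w q) = f

namespace DiamAux

/-- numeric state code of cell `j` holding bit `x` -/
def tokN (j : ℕ) (x : Bool) : ℕ := 2 * j + cond x 1 0

/-- the action of the letter announcing output bit `σ`, on numeric codes -/
def letterN (r : ℕ) (taps : ℕ → Bool) (σ : Bool) (m : ℕ) : Option ℕ :=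
  if m < 2 * r then
    if m / 2 + 1 = r then
      (if (decide (m % 2 = 1)) = σ then some (tokN 0 (σ && taps 0)) else none)
    else some (tokN (m / 2 + 1) (xor (decide (m % 2 = 1)) (σ && taps (m / 2 + 1))))
  else none

/-- the letter as a partial transformation of `Fin n` -/
def letterF (n r : ℕ) (taps : ℕ → Bool) (σ : Bool) : Fin n → Option (Fin n) :=
  fun q => (letterN r taps σ q.val).bind (fun m => if h : m < n then some ⟨m, h⟩ else none)

/-- configuration of the register at time `t` (Galois LFSR) -/
def conf (r : ℕ) (taps : ℕ → Bool) : ℕ → ℕ → Bool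
  | 0 => fun j => decide (j = 0)
  | t + 1 => fun j =>
      xor (if j = 0 then false else conf r taps t (j - 1))
          (conf r taps t (r - 1) && taps j)

/-- the forced word of length `t` -/
def Wrd (n r : ℕ) (taps : ℕ → Bool) (t : ℕ) : List (Fin n → Option (Fin n)) :=
  (List.range t).map fun s => letterF n r taps (conf r taps s (r - 1))

/-- the state of `Fin n` coding cell `j` with bit `x` -/
def finTok (n : ℕ) (hn : 0 < n) (j : ℕ) (x : Bool) : Fin n :=
  ⟨tokN j x % n, Nat.mod_lt _ hn⟩

lemma tokN_lt {r j : ℕ} (x : Bool) (hj : j < r) : tokN j x < 2 * r := by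
  cases x <;> simp [tokN] <;> omega

lemma tokN_div (j : ℕ) (x : Bool) : tokN j x / 2 = j := by
  cases x <;> simp [tokN] <;> omega

lemma tokN_mod (j : ℕ) (x : Bool) : decide (tokN j x % 2 = 1) = x := by
  cases x <;> simp [tokN, Nat.mul_add_mod]

lemma finTok_val {n r : ℕ} (hn : 0 < n) (hrn : 2 * r ≤ n) {j : ℕ} (hj : j < r) (x : Bool) :
    (finTok n hn j x).val = tokN j x := by
  have := tokN_lt x hj
  simp [finTok, Nat.mod_eq_of_lt (by omega : tokN j x < n)]

lemma finTok_inj {n r : ℕ} (hn : 0 < n) (hrn : 2 * r ≤ n) {j j' : ℕ} (hj : j < r) (hj' : j' < r)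
    {x x' : Bool} (h : finTok n hn j x = finTok n hn j' x') : j = j' ∧ x = x' := by
  have h1 : tokN j x = tokN j' x' := by
    have h2 : (finTok n hn j x).val = (finTok n hn j' x').val := by rw [h]
    rwa [finTok_val hn hrn hj, finTok_val hn hrn hj'] at h2
  constructor
  · cases x <;> cases x' <;> simp only [tokN, Bool.cond_false, Bool.cond_true] at h1 <;> omega
  · cases x <;> cases x' <;> simp only [tokN, Bool.cond_false, Bool.cond_true] at h1 <;>
      first | rfl | (exact absurd h1 (by omega))

lemma ptApply_append_single {n : ℕ} (w : List (Fin n → Option (Fin n))) (x : Fin n → Option (Fin n))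
    (q : Fin n) : ptApply (w ++ [x]) q = (ptApply w q).bind x := by
  simp [ptApply, List.foldl_append]


lemma conf_succ_zero (r : ℕ) (taps : ℕ → Bool) (t : ℕ) :
    conf r taps (t + 1) 0 = (conf r taps t (r - 1) && taps 0) := by
  simp [conf]

lemma conf_succ_pos (r : ℕ) (taps : ℕ → Bool) (t c : ℕ) :
    conf r taps (t + 1) (c + 1) = xor (conf r taps t c) (conf r taps t (r - 1) && taps (c + 1)) := by
  simp [conf]

lemma step_lemma (n r : ℕ) (taps : ℕ → Bool) (hn : 0 < n) (hrn : 2 * r ≤ n)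
    (t c : ℕ) (hc : c < r) :
    letterF n r taps (conf r taps t (r - 1)) (finTok n hn c (conf r taps t c)) =
      some (finTok n hn ((c + 1) % r) (conf r taps (t + 1) ((c + 1) % r))) := by
  have hval : (finTok n hn c (conf r taps t c)).val = tokN c (conf r taps t c) :=
    finTok_val hn hrn hc _
  unfold letterF
  rw [hval]
  unfold letterN
  rw [if_pos (tokN_lt _ hc), tokN_div, tokN_mod]
  by_cases hcr : c + 1 = r
  · have hc' : c = r - 1 := by omega
    rw [if_pos hcr]
    rw [if_pos (show conf r taps t c = conf r taps t (r - 1) by rw [hc'])]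
    have hmod : (c + 1) % r = 0 := by rw [hcr, Nat.mod_self]
    rw [hmod, conf_succ_zero]
    have hb : tokN 0 (conf r taps t (r - 1) && taps 0) < n := by
      have : tokN 0 (conf r taps t (r - 1) && taps 0) < 2 * r := tokN_lt _ (by omega)
      omega
    simp only [Option.bind_some, Option.bind_some, hb, dif_pos]
    congr 1
    apply Fin.ext
    rw [finTok_val hn hrn (by omega : (0:ℕ) < r)]
  · have hlt : c + 1 < r := by omega
    rw [if_neg hcr]
    have hmod : (c + 1) % r = c + 1 := Nat.mod_eq_of_lt hlt
    rw [hmod, conf_succ_pos]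
    have hb : tokN (c + 1) (xor (conf r taps t c) (conf r taps t (r - 1) && taps (c + 1))) < n := by
      have := tokN_lt (xor (conf r taps t c) (conf r taps t (r - 1) && taps (c + 1))) hlt
      omega
    simp only [Option.bind_some, hb, dif_pos]
    congr 1
    apply Fin.ext
    rw [finTok_val hn hrn hlt]


lemma Wrd_succ (n r : ℕ) (taps : ℕ → Bool) (t : ℕ) :
    Wrd n r taps (t + 1) = Wrd n r taps t ++ [letterF n r taps (conf r taps t (r - 1))] := by
  simp [Wrd, List.range_succ]

lemma run_lemma (n r : ℕ) (taps : ℕ → Bool) (hn : 0 < n) (hr : 0 < r) (hrn : 2 * r ≤ n) :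
    ∀ t j, j < r →
      ptApply (Wrd n r taps t) (finTok n hn j (conf r taps 0 j)) =
        some (finTok n hn ((j + t) % r) (conf r taps t ((j + t) % r))) := by
  intro t
  induction t with
  | zero =>
    intro j hj
    have : (j + 0) % r = j := by rw [Nat.add_zero, Nat.mod_eq_of_lt hj]
    rw [this]
    rfl
  | succ t ih =>
    intro j hj
    rw [Wrd_succ, ptApply_append_single, ih j hj]
    have hb : (ptApply [letterF n r taps (conf r taps t (r - 1))]
        (finTok n hn ((j + t) % r) (conf r taps t ((j + t) % r)))) =
        (some (finTok n hn ((j + t) % r) (conf r taps t ((j + t) % r)))).bind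
          (letterF n r taps (conf r taps t (r - 1))) := rfl
    rw [Option.bind_some]
    have hc : (j + t) % r < r := Nat.mod_lt _ hr
    rw [step_lemma n r taps hn hrn t ((j + t) % r) hc]
    have hidx : ((j + t) % r + 1) % r = (j + (t + 1)) % r := by
      rw [Nat.mod_add_mod, show j + t + 1 = j + (t + 1) from by omega]
    rw [hidx]

lemma letter_kill (n r : ℕ) (taps : ℕ → Bool) (hn : 0 < n) (hr : 0 < r) (hrn : 2 * r ≤ n)
    (σ x : Bool) (hne : ¬ (x = σ)) :
    letterF n r taps σ (finTok n hn (r - 1) x) = none := by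
  unfold letterF
  rw [finTok_val hn hrn (by omega) x]
  unfold letterN
  rw [if_pos (tokN_lt x (by omega)), tokN_div, tokN_mod,
    if_pos (show r - 1 + 1 = r by omega), if_neg hne]
  rfl

lemma force_lemma (n r : ℕ) (taps : ℕ → Bool) (hn : 0 < n) (hr : 0 < r) (hrn : 2 * r ≤ n) :
    ∀ w : List (Fin n → Option (Fin n)),
      (∀ g ∈ w, g = letterF n r taps false ∨ g = letterF n r taps true) →
      (∀ j, j < r → ptApply w (finTok n hn j (conf r taps 0 j)) ≠ none) →
      w = Wrd n r taps w.length := by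
  intro w
  induction w using List.reverseRecOn with
  | nil => intro _ _; rfl
  | append_singleton u x ih =>
    intro hmem halive
    have hu : u = Wrd n r taps u.length := by
      apply ih
      · intro g hg; exact hmem g (by simp [hg])
      · intro j hj hnone
        apply halive j hj
        rw [ptApply_append_single, hnone]
        rfl
    have hjlt : r - 1 - u.length % r < r := by omega
    have hjt : (r - 1 - u.length % r + u.length) % r = r - 1 := by
      have hdm := Nat.div_add_mod u.length r
      have htmod : u.length % r < r := Nat.mod_lt _ hr
      have h1 : r - 1 - u.length % r + u.length = (r - 1) + r * (u.length / r) := by omega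
      rw [h1, Nat.add_mul_mod_self_left, Nat.mod_eq_of_lt (by omega)]
    have hrun := run_lemma n r taps hn hr hrn u.length (r - 1 - u.length % r) hjlt
    rw [hjt] at hrun
    have halive' := halive (r - 1 - u.length % r) hjlt
    rw [ptApply_append_single] at halive'
    obtain ⟨t, ht⟩ : ∃ t, t = u.length := ⟨u.length, rfl⟩
    rw [← ht] at hu hrun halive'
    have hup : ptApply u (finTok n hn (r - 1 - t % r) (conf r taps 0 (r - 1 - t % r)))
        = some (finTok n hn (r - 1) (conf r taps t (r - 1))) := by
      conv_lhs => rw [hu]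
      exact hrun
    rw [hup, Option.bind_some] at halive'
    have hx : x = letterF n r taps (conf r taps t (r - 1)) := by
      rcases hmem x (by simp) with h | h <;> subst h
      · cases hσ : conf r taps t (r - 1)
        · rfl
        · exfalso
          apply halive'
          rw [hσ] at *
          exact letter_kill n r taps hn hr hrn false true (by simp)
      · cases hσ : conf r taps t (r - 1)
        · exfalso
          apply halive'
          rw [hσ] at *
          exact letter_kill n r taps hn hr hrn true false (by simp)
        · rfl
    have hlen : (u ++ [x]).length = t + 1 := by simp [ht]
    rw [hlen, Wrd_succ, hx, ← hu]


section Algebra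

variable {K : Type*} [Field K]

/-- read a configuration as a field element -/
def phi (r : ℕ) (g : K) (v : ℕ → Bool) : K :=
  ∑ j ∈ Finset.range r, if v j then g ^ j else 0

lemma ite_xor (hchar : ∀ x : K, x + x = 0) (a b : Bool) (x : K) :
    (if xor a b then x else 0) = (if a then x else 0) + (if b then x else 0) := by
  cases a <;> cases b <;> simp [hchar x]

lemma phi_succ (m : ℕ) (taps : ℕ → Bool) (g : K) (hchar : ∀ x : K, x + x = 0)
    (htaps : (∑ j ∈ Finset.range (m + 1), if taps j then g ^ j else 0) = g ^ (m + 1)) (t : ℕ) :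
    phi (m + 1) g (conf (m + 1) taps (t + 1)) = g * phi (m + 1) g (conf (m + 1) taps t) := by
  have hconf0 : conf (m + 1) taps (t + 1) 0 = (conf (m + 1) taps t m && taps 0) := by
    simpa using conf_succ_zero (m + 1) taps t
  have hconfS : ∀ i, conf (m + 1) taps (t + 1) (i + 1)
      = xor (conf (m + 1) taps t i) (conf (m + 1) taps t m && taps (i + 1)) := by
    intro i; simpa using conf_succ_pos (m + 1) taps t i
  rw [phi, Finset.sum_range_succ']
  rw [phi, Finset.mul_sum]
  have hR : ∀ j ∈ Finset.range (m + 1), g * (if conf (m + 1) taps t j then g ^ j else 0)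
      = (if conf (m + 1) taps t j then g ^ (j + 1) else 0) := by
    intro j _; rw [mul_ite, mul_zero, ← pow_succ']
  rw [Finset.sum_congr rfl hR, Finset.sum_range_succ]
  cases hσ : conf (m + 1) taps t m
  · have hL : ∀ i ∈ Finset.range m, (if conf (m + 1) taps (t + 1) (i + 1) then g ^ (i + 1) else 0)
        = (if conf (m + 1) taps t i then g ^ (i + 1) else 0) := by
      intro i _; rw [hconfS i, hσ]; simp
    rw [Finset.sum_congr rfl hL, hconf0, hσ]
    simp
  · have hL : ∀ i ∈ Finset.range m, (if conf (m + 1) taps (t + 1) (i + 1) then g ^ (i + 1) else 0)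
        = (if conf (m + 1) taps t i then g ^ (i + 1) else 0)
          + (if taps (i + 1) then g ^ (i + 1) else 0) := by
      intro i _
      rw [hconfS i, hσ]
      simpa using ite_xor hchar (conf (m + 1) taps t i) (taps (i + 1)) (g ^ (i + 1))
    rw [Finset.sum_congr rfl hL, Finset.sum_add_distrib, hconf0, hσ]
    have hsum : (∑ i ∈ Finset.range m, if taps (i + 1) then g ^ (i + 1) else 0)
        + (if taps 0 then g ^ 0 else 0) = g ^ (m + 1) := by
      rw [← Finset.sum_range_succ' (fun j => if taps j then g ^ j else 0) m]
      exact htaps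
    simp only [Bool.true_and, if_true]
    rw [add_assoc, hsum]

lemma phi_conf (m : ℕ) (taps : ℕ → Bool) (g : K) (hchar : ∀ x : K, x + x = 0)
    (htaps : (∑ j ∈ Finset.range (m + 1), if taps j then g ^ j else 0) = g ^ (m + 1)) :
    ∀ t, phi (m + 1) g (conf (m + 1) taps t) = g ^ t := by
  intro t
  induction t with
  | zero =>
    rw [phi, pow_zero]
    have : ∀ j ∈ Finset.range (m + 1), (if conf (m + 1) taps 0 j then g ^ j else 0)
        = (if j = 0 then g ^ j else 0) := by
      intro j _
      simp [conf]
    rw [Finset.sum_congr rfl this, Finset.sum_ite_eq' (Finset.range (m + 1)) 0 (fun j => g ^ j)]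
    simp
  | succ t ih =>
    rw [phi_succ m taps g hchar htaps t, ih, ← pow_succ']

lemma exists_taps [Finite K] (r : ℕ) (hr : 0 < r) (hcard : Nat.card K ≤ 2 ^ r)
    (hchar : ∀ x : K, x + x = 0) (g : K) :
    ∃ taps : ℕ → Bool, (∑ j ∈ Finset.range r, if taps j then g ^ j else 0) = g ^ r := by
  classical
  letI : Fintype K := Fintype.ofFinite K
  have : ∃ s s' : Fin (r + 1) → Bool, s ≠ s' ∧
      (∑ j ∈ Finset.range (r + 1), if (fun i => if h : i < r + 1 then s ⟨i, h⟩ else false) j then g ^ j else 0)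
      = (∑ j ∈ Finset.range (r + 1), if (fun i => if h : i < r + 1 then s' ⟨i, h⟩ else false) j then g ^ j else 0) := by
    have hcardlt : Fintype.card K < Fintype.card (Fin (r + 1) → Bool) := by
      have h2 : Fintype.card (Fin (r + 1) → Bool) = 2 ^ (r + 1) := by
        simp
      rw [h2]
      rw [Nat.card_eq_fintype_card] at hcard
      calc Fintype.card K ≤ 2 ^ r := hcard
        _ < 2 ^ (r + 1) := by
            have h3 : (2:ℕ) ^ r < 2 ^ (r + 1) := by
              apply Nat.pow_lt_pow_right (by norm_num) (Nat.lt_succ_self r)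
            omega
    obtain ⟨s, s', hne, heq⟩ := Fintype.exists_ne_map_eq_of_card_lt
      (fun s : Fin (r + 1) → Bool =>
        ∑ j ∈ Finset.range (r + 1), if (fun i => if h : i < r + 1 then s ⟨i, h⟩ else false) j then g ^ j else 0)
      hcardlt
    exact ⟨s, s', hne, heq⟩
  obtain ⟨s, s', hne, heq⟩ := this
  set sN : ℕ → Bool := fun i => if h : i < r + 1 then s ⟨i, h⟩ else false with hsN
  set sN' : ℕ → Bool := fun i => if h : i < r + 1 then s' ⟨i, h⟩ else false with hsN'
  set dN : ℕ → Bool := fun i => xor (sN i) (sN' i) with hdN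
  have hdsum : (∑ j ∈ Finset.range (r + 1), if dN j then g ^ j else 0) = 0 := by
    have hsplit : ∀ j ∈ Finset.range (r + 1), (if dN j then g ^ j else 0)
        = (if sN j then g ^ j else 0) + (if sN' j then g ^ j else 0) := by
      intro j _; exact ite_xor hchar (sN j) (sN' j) (g ^ j)
    rw [Finset.sum_congr rfl hsplit, Finset.sum_add_distrib, ← heq]
    exact hchar _
  have hdne : ∃ i, i < r + 1 ∧ dN i = true := by
    by_contra hall
    push_neg at hall
    apply hne
    funext i
    have h1 : xor (sN i.val) (sN' i.val) = false := by
      have h0 := hall i.val i.isLt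
      simpa [hdN] using h0
    have hsi : sN i.val = s i := by simp [hsN, i.isLt, Fin.is_le]
    have hsi' : sN' i.val = s' i := by simp [hsN', i.isLt, Fin.is_le]
    rw [hsi, hsi'] at h1
    revert h1
    cases s i <;> cases s' i <;> simp
  -- extract the maximal set index
  obtain ⟨i0, hi0lt, hi0⟩ := hdne
  set S := (Finset.range (r + 1)).filter (fun j => dN j = true) with hS
  have hSne : S.Nonempty := ⟨i0, by simp [hS, hi0lt, hi0]⟩
  set mval := S.max' hSne with hm
  have hmS : mval ∈ S := S.max'_mem hSne
  have hmlt : mval < r + 1 := by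
    have := Finset.mem_filter.mp hmS
    simpa using (Finset.mem_range.mp this.1)
  have hdm : dN mval = true := (Finset.mem_filter.mp hmS).2
  have hmax : ∀ j, dN j = true → j ≤ mval := by
    intro j hj
    by_cases hjr : j < r + 1
    · exact S.le_max' j (by simp [hS, hjr, hj])
    · exfalso
      have : dN j = false := by
        simp [hdN, hsN, hsN', dif_neg hjr, show ¬ j ≤ r by omega]
      rw [this] at hj
      exact Bool.false_ne_true hj
  -- split the zero sum at mval
  have hz : g ^ mval + (∑ j ∈ Finset.range mval, if dN j then g ^ j else 0) = 0 := by
    have h1 : (∑ j ∈ Finset.range (r + 1), if dN j then g ^ j else 0)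
        = (∑ j ∈ Finset.range (mval + 1), if dN j then g ^ j else 0)
          + (∑ j ∈ Finset.Ico (mval + 1) (r + 1), if dN j then g ^ j else 0) := by
      rw [Finset.range_eq_Ico, Finset.range_eq_Ico,
        Finset.sum_Ico_consecutive _ (Nat.zero_le _) (by omega : mval + 1 ≤ r + 1)]
    have h2 : (∑ j ∈ Finset.Ico (mval + 1) (r + 1), if dN j then g ^ j else 0) = 0 := by
      apply Finset.sum_eq_zero
      intro j hj
      have hjm : mval < j := (Finset.mem_Ico.mp hj).1
      have : dN j = false := by
        cases hd : dN j
        · rfl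
        · exact absurd (hmax j hd) (by omega)
      simp [this]
    rw [h1, h2, add_zero, Finset.sum_range_succ, hdm] at hdsum
    rw [add_comm] at hdsum
    simpa using hdsum
  have hgm : g ^ mval = ∑ j ∈ Finset.range mval, if dN j then g ^ j else 0 := by
    have := hchar (∑ j ∈ Finset.range mval, if dN j then g ^ j else 0)
    calc g ^ mval = g ^ mval + ((∑ j ∈ Finset.range mval, if dN j then g ^ j else 0)
          + (∑ j ∈ Finset.range mval, if dN j then g ^ j else 0)) := by rw [this, add_zero]
      _ = (g ^ mval + (∑ j ∈ Finset.range mval, if dN j then g ^ j else 0))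
          + (∑ j ∈ Finset.range mval, if dN j then g ^ j else 0) := by ring
      _ = ∑ j ∈ Finset.range mval, if dN j then g ^ j else 0 := by rw [hz, zero_add]
  -- multiply by g^(r - mval)
  have hmr : mval ≤ r := by omega
  have hgr : g ^ r = ∑ j ∈ Finset.range mval, if dN j then g ^ (r - mval + j) else 0 := by
    have : g ^ r = g ^ (r - mval) * g ^ mval := by
      rw [← pow_add]
      congr 1
      omega
    rw [this, hgm, Finset.mul_sum]
    apply Finset.sum_congr rfl
    intro j _
    rw [mul_ite, mul_zero, ← pow_add]
  refine ⟨fun j => if j < r - mval then false else dN (j - (r - mval)), ?_⟩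
  rw [hgr]
  have hfirst : (∑ j ∈ Finset.Ico 0 (r - mval),
      if (if j < r - mval then false else dN (j - (r - mval))) then g ^ j else 0) = 0 := by
    apply Finset.sum_eq_zero
    intro j hj
    have : j < r - mval := (Finset.mem_Ico.mp hj).2
    simp [this]
  conv_lhs => rw [Finset.range_eq_Ico,
    ← Finset.sum_Ico_consecutive _ (Nat.zero_le (r - mval)) (by omega : r - mval ≤ r)]
  rw [hfirst, zero_add]
  rw [Finset.sum_Ico_eq_sum_range]
  rw [show r - (r - mval) = mval from by omega]
  apply Finset.sum_congr rfl
  intro j _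
  have h1 : ¬ (r - mval + j < r - mval) := by omega
  have h2 : r - mval + j - (r - mval) = j := by omega
  simp only [h1, if_false, h2]

end Algebra


lemma letter_head_some (n r : ℕ) (taps : ℕ → Bool) (hn : 0 < n) (hr : 0 < r) (hrn : 2 * r ≤ n)
    (σ : Bool) :
    letterF n r taps σ (finTok n hn (r - 1) σ) = some (finTok n hn 0 (σ && taps 0)) := by
  unfold letterF
  rw [finTok_val hn hrn (by omega) σ]
  unfold letterN
  rw [if_pos (tokN_lt σ (by omega)), tokN_div, tokN_mod,
    if_pos (show r - 1 + 1 = r by omega), if_pos rfl]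
  have hb : tokN 0 (σ && taps 0) < n := by
    have := tokN_lt (σ && taps 0) hr
    omega
  simp only [Option.bind_some, hb, dif_pos]
  congr 1
  apply Fin.ext
  rw [finTok_val hn hrn hr]

lemma length_Wrd (n r : ℕ) (taps : ℕ → Bool) (t : ℕ) : (Wrd n r taps t).length = t := by
  simp [Wrd]

end DiamAux

open DiamAux in
/-- For every `n ≥ 9` with `n ≡ 4 (mod 5)`, there is an alphabet of `2` partial
transformations of an `n`-element set and a partial transformation `f` expressed by some
nonempty word over it such that every nonempty word expressing `f` has length at least
`4 ^ ((n - 4) / 5)`; i.e. the depth of `f`, and hence the diameter of the alphabet,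
is at least `4 ^ ((n - 4) / 5)`. -/
theorem diam_lower_bound_binary (n : ℕ) (hn : 9 ≤ n) (hmod : n % 5 = 4) :
    ∃ A : Finset (Fin n → Option (Fin n)),
      A.card = 2 ∧
      ∃ f : Fin n → Option (Fin n),
        (∃ w, Expresses A w f) ∧
        (∀ w, Expresses A w f → 4 ^ ((n - 4) / 5) ≤ w.length) := by
  show ∃ A : Finset (Fin n → Option (Fin n)),
      A.card = 2 ∧
      ∃ f : Fin n → Option (Fin n),
        (∃ w, w ≠ [] ∧ (∀ g ∈ w, g ∈ A) ∧ (fun q => ptApply w q) = f) ∧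
        (∀ w, (w ≠ [] ∧ (∀ g ∈ w, g ∈ A) ∧ (fun q => ptApply w q) = f) →
          4 ^ ((n - 4) / 5) ≤ w.length)
  classical
  obtain ⟨k, hk⟩ : ∃ k, (n - 4) / 5 = k := ⟨_, rfl⟩
  have hk1 : 1 ≤ k := by omega
  have hnk : n = 5 * k + 4 := by omega
  have hrn : 2 * (2 * k + 1) ≤ n := by omega
  have hn0 : 0 < n := by omega
  have hrp : 0 < 2 * k + 1 := by omega
  haveI : Fact (Nat.Prime 2) := ⟨Nat.prime_two⟩
  obtain ⟨g0, hg0⟩ := IsCyclic.exists_generator (α := (GaloisField 2 (2 * k + 1))ˣ)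
  have horder : orderOf g0 = 2 ^ (2 * k + 1) - 1 := by
    rw [orderOf_eq_card_of_forall_mem_zpowers hg0, Nat.card_units,
      GaloisField.card 2 (2 * k + 1) (by omega)]
  have hchar : ∀ x : GaloisField 2 (2 * k + 1), x + x = 0 := by
    intro x
    have h2 : (2 : GaloisField 2 (2 * k + 1)) = 0 := by
      have := CharP.cast_eq_zero (GaloisField 2 (2 * k + 1)) 2
      exact_mod_cast this
    calc x + x = 2 * x := by ring
    _ = 0 := by rw [h2, zero_mul]
  have hcard : Nat.card (GaloisField 2 (2 * k + 1)) ≤ 2 ^ (2 * k + 1) :=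
    le_of_eq (GaloisField.card 2 (2 * k + 1) (by omega))
  obtain ⟨taps, htaps⟩ := exists_taps (2 * k + 1) hrp hcard hchar (g0 : GaloisField 2 (2 * k + 1))
  have hT1 : 1 ≤ 2 ^ (2 * k + 1) - 1 := by
    have : 2 ≤ 2 ^ (2 * k + 1) := by
      calc 2 = 2 ^ 1 := by norm_num
      _ ≤ 2 ^ (2 * k + 1) := Nat.pow_le_pow_right (by norm_num) (by omega)
    omega
  have h4T : 4 ^ k ≤ 2 ^ (2 * k + 1) - 1 := by
    have h1 : (4 : ℕ) ^ k = 2 ^ (2 * k) := by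
      rw [show (4 : ℕ) = 2 ^ 2 from rfl, ← pow_mul]
    have h2 : (2 : ℕ) ^ (2 * k + 1) = 2 * 2 ^ (2 * k) := by
      rw [pow_succ]
      ring
    have h3 : 1 ≤ (2 : ℕ) ^ (2 * k) := Nat.one_le_two_pow
    omega
  have hab : letterF n (2 * k + 1) taps false ≠ letterF n (2 * k + 1) taps true := by
    intro hcontra
    have h1 := congrFun hcontra (finTok n hn0 (2 * k + 1 - 1) false)
    rw [letter_head_some n (2 * k + 1) taps hn0 hrp hrn false,
      letter_kill n (2 * k + 1) taps hn0 hrp hrn true false (by simp)] at h1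
    exact Option.some_ne_none _ h1
  refine ⟨{letterF n (2 * k + 1) taps false, letterF n (2 * k + 1) taps true}, ?_, ?_⟩
  · rw [Finset.card_insert_of_notMem (by simpa using hab), Finset.card_singleton]
  refine ⟨fun q => ptApply (Wrd n (2 * k + 1) taps (2 ^ (2 * k + 1) - 1)) q,
    ⟨Wrd n (2 * k + 1) taps (2 ^ (2 * k + 1) - 1), ?_, ?_, rfl⟩, ?_⟩
  · -- nonempty
    intro hcontra
    have hlen := length_Wrd n (2 * k + 1) taps (2 ^ (2 * k + 1) - 1)
    rw [hcontra] at hlen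
    simp at hlen
    omega
  · -- letters in A
    intro g hg
    simp only [Wrd, List.mem_map, List.mem_range] at hg
    obtain ⟨s, _, rfl⟩ := hg
    cases conf (2 * k + 1) taps s (2 * k + 1 - 1)
    · exact Finset.mem_insert_self _ _
    · exact Finset.mem_insert_of_mem (Finset.mem_singleton_self _)
  · -- the lower bound
    rintro w ⟨hwne, hwmem, hweq⟩
    have hmem' : ∀ g ∈ w, g = letterF n (2 * k + 1) taps false
        ∨ g = letterF n (2 * k + 1) taps true := by
      intro g hg
      rcases Finset.mem_insert.mp (hwmem g hg) with h | h
      · exact Or.inl h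
      · exact Or.inr (Finset.mem_singleton.mp h)
    have hweq' : ∀ q, ptApply w q = ptApply (Wrd n (2 * k + 1) taps (2 ^ (2 * k + 1) - 1)) q :=
      fun q => congrFun hweq q
    have halive : ∀ j, j < 2 * k + 1 →
        ptApply w (finTok n hn0 j (conf (2 * k + 1) taps 0 j)) ≠ none := by
      intro j hj
      rw [hweq', run_lemma n (2 * k + 1) taps hn0 hrp hrn (2 ^ (2 * k + 1) - 1) j hj]
      exact Option.some_ne_none _
    have hw := force_lemma n (2 * k + 1) taps hn0 hrp hrn w hmem' halive
    obtain ⟨t, ht⟩ : ∃ t, w.length = t := ⟨_, rfl⟩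
    rw [ht] at hw
    have ht0 : t ≠ 0 := by
      intro hcontra
      apply hwne
      rw [hcontra] at ht
      exact List.length_eq_zero_iff.mp ht
    have htok : ∀ j, j < 2 * k + 1 →
        (finTok n hn0 ((j + t) % (2 * k + 1)) (conf (2 * k + 1) taps t ((j + t) % (2 * k + 1))))
          = (finTok n hn0 ((j + (2 ^ (2 * k + 1) - 1)) % (2 * k + 1))
              (conf (2 * k + 1) taps (2 ^ (2 * k + 1) - 1)
                ((j + (2 ^ (2 * k + 1) - 1)) % (2 * k + 1)))) := by
      intro j hj
      have e1 : ptApply w (finTok n hn0 j (conf (2 * k + 1) taps 0 j))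
          = some (finTok n hn0 ((j + t) % (2 * k + 1))
              (conf (2 * k + 1) taps t ((j + t) % (2 * k + 1)))) := by
        conv_lhs => rw [hw]
        exact run_lemma n (2 * k + 1) taps hn0 hrp hrn t j hj
      have e2 := hweq' (finTok n hn0 j (conf (2 * k + 1) taps 0 j))
      rw [run_lemma n (2 * k + 1) taps hn0 hrp hrn (2 ^ (2 * k + 1) - 1) j hj] at e2
      rw [e2] at e1
      exact (Option.some.inj e1).symm
    have hmodtr : t % (2 * k + 1) = (2 ^ (2 * k + 1) - 1) % (2 * k + 1) := by
      have h1 := htok 0 hrp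
      have h2 := finTok_inj hn0 hrn (Nat.mod_lt _ hrp) (Nat.mod_lt _ hrp) h1
      simpa using h2.1
    have hconf : ∀ c, c < 2 * k + 1 →
        conf (2 * k + 1) taps t c = conf (2 * k + 1) taps (2 ^ (2 * k + 1) - 1) c := by
      intro c hc
      have hjlt : (c + (2 * k + 1 - t % (2 * k + 1))) % (2 * k + 1) < 2 * k + 1 :=
        Nat.mod_lt _ hrp
      have hmodgen : ∀ s : ℕ, s % (2 * k + 1) = t % (2 * k + 1) →
          ((c + (2 * k + 1 - t % (2 * k + 1))) % (2 * k + 1) + s) % (2 * k + 1) = c := by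
        intro s hs
        have hdm := Nat.div_add_mod s (2 * k + 1)
        have h2 : s % (2 * k + 1) < 2 * k + 1 := Nat.mod_lt _ hrp
        have h2' : t % (2 * k + 1) < 2 * k + 1 := Nat.mod_lt _ hrp
        have h4 : (2 * k + 1) * (s / (2 * k + 1) + 1)
            = (2 * k + 1) * (s / (2 * k + 1)) + (2 * k + 1) := by ring
        have h3 : (c + (2 * k + 1 - t % (2 * k + 1))) + s
            = c + (2 * k + 1) * (s / (2 * k + 1) + 1) := by omega
        rw [Nat.mod_add_mod, h3, Nat.add_mul_mod_self_left, Nat.mod_eq_of_lt hc]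
      have hjt := hmodgen t rfl
      have hjT := hmodgen (2 ^ (2 * k + 1) - 1) hmodtr.symm
      have h1 := htok ((c + (2 * k + 1 - t % (2 * k + 1))) % (2 * k + 1)) hjlt
      rw [hjt, hjT] at h1
      exact (finTok_inj hn0 hrn hc hc h1).2
    have hphit : phi (2 * k + 1) (g0 : GaloisField 2 (2 * k + 1)) (conf (2 * k + 1) taps t)
        = phi (2 * k + 1) (g0 : GaloisField 2 (2 * k + 1))
            (conf (2 * k + 1) taps (2 ^ (2 * k + 1) - 1)) := by
      unfold phi
      apply Finset.sum_congr rfl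
      intro c hc
      rw [hconf c (Finset.mem_range.mp hc)]
    have hphi1 := phi_conf (2 * k) taps (g0 : GaloisField 2 (2 * k + 1)) hchar htaps t
    have hphi2 := phi_conf (2 * k) taps (g0 : GaloisField 2 (2 * k + 1)) hchar htaps
      (2 ^ (2 * k + 1) - 1)
    have hgg : (g0 : GaloisField 2 (2 * k + 1)) ^ t
        = (g0 : GaloisField 2 (2 * k + 1)) ^ (2 ^ (2 * k + 1) - 1) := by
      rw [← hphi1, ← hphi2]
      exact hphit
    have hu : g0 ^ t = g0 ^ (2 ^ (2 * k + 1) - 1) := by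
      apply Units.ext
      rw [Units.val_pow_eq_pow_val, Units.val_pow_eq_pow_val]
      exact hgg
    have hmodeq : t ≡ (2 ^ (2 * k + 1) - 1) [MOD orderOf g0] := pow_eq_pow_iff_modEq.mp hu
    rw [horder] at hmodeq
    have hdvd : (2 ^ (2 * k + 1) - 1) ∣ t := by
      have h1 : t % (2 ^ (2 * k + 1) - 1)
          = (2 ^ (2 * k + 1) - 1) % (2 ^ (2 * k + 1) - 1) := hmodeq
      rw [Nat.mod_self] at h1
      exact Nat.dvd_of_mod_eq_zero h1
    have hTt : (2 ^ (2 * k + 1) - 1) ≤ t := Nat.le_of_dvd (by omega) hdvd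
    rw [ht, hk]
    omega
end

section
/- For every integer k ≥ 1, there exist a set A of (binom(2k, k) + 2) partial transformations of a 2k-element set and a total transformation f (a function defined on all of the 2k-element set) expressed by some nonempty word over A such that the depth of f with respect to A is at least binom(2k, k) · g(k), where g(k) is the maximum order of a permutation of a k-element set. -/
/-- The Landau function: the maximum order of a permutation of a `k`-element set. -/
noncomputable def landau (k : ℕ) : ℕ :=
  Finset.univ.sup fun σ : Equiv.Perm (Fin k) => orderOf σ

namespace DLB

open Finset Function

variable {k : ℕ}

/-- the collapsing surjection `Fin (2k) → Fin k` -/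
def pmap (k : ℕ) : Fin (2*k) → Fin k := fun q =>
  if h : (q : ℕ) < k then ⟨q, h⟩ else ⟨(q : ℕ) - k, by have := q.isLt; omega⟩

lemma pmap_surj (k : ℕ) : Function.Surjective (pmap k) := fun x =>
  ⟨⟨x, by have := x.isLt; omega⟩, by simp [pmap, x.isLt]⟩

abbrev CC (k : ℕ) : ℕ := (2*k).choose k

instance (k : ℕ) : NeZero (CC k) := ⟨(Nat.choose_pos (by omega)).ne'⟩

lemma one_le_CC (k : ℕ) : 1 ≤ CC k := Nat.choose_pos (by omega)

lemma two_le_CC (hk : 1 ≤ k) : 2 ≤ CC k := by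
  have h1 : Nat.choose (2*k) 1 ≤ Nat.choose (2*k) ((2*k)/2) := Nat.choose_le_middle 1 (2*k)
  have h2 : (2*k)/2 = k := by omega
  rw [h2, Nat.choose_one_right] at h1
  show 2 ≤ (2*k).choose k
  omega

/-- all k-subsets of Fin (2k) -/
def SS (k : ℕ) : Finset (Finset (Fin (2*k))) := Finset.powersetCard k Finset.univ

lemma card_SS (k : ℕ) : (SS k).card = CC k := by
  simp [SS, Finset.card_powersetCard]

noncomputable def ES (k : ℕ) : ↥(SS k) ≃ Fin (CC k) := (SS k).equivFin.trans (finCongr (card_SS k))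

/-- enumeration of the k-subsets -/
noncomputable def S (j : Fin (CC k)) : Finset (Fin (2*k)) := ((ES k).symm j : ↥(SS k)).val

lemma S_card (j : Fin (CC k)) : (S j).card = k :=
  (Finset.mem_powersetCard.mp ((ES k).symm j).2).2

lemma S_inj : Function.Injective (S (k := k)) := fun i j h =>
  (ES k).symm.injective (Subtype.ext h)

open Classical in
/-- bijection `Fin k ≃ S j`: when `pmap` is injective on `S j`, it is the inverse of `pmap` -/
noncomputable def EE (j : Fin (CC k)) : Fin k ≃ ↥(S j) :=
  if h : Set.InjOn (pmap k) ↑(S j) then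
    (Equiv.ofBijective (fun x : ↥(S j) => pmap k ↑x)
      ((Fintype.bijective_iff_injective_and_card _).mpr
        ⟨fun a b hab => Subtype.ext (h (by simpa using a.2) (by simpa using b.2) hab),
          by simp [Fintype.card_coe, S_card]⟩)).symm
  else ((S j).equivFinOfCardEq (S_card j)).symm

noncomputable def e (j : Fin (CC k)) : Fin k → Fin (2*k) := fun x => (EE j x : Fin (2*k))

lemma e_mem (j : Fin (CC k)) (x : Fin k) : e j x ∈ S j := (EE j x).2

lemma e_inj (j : Fin (CC k)) : Function.Injective (e j) :=
  fun a b h => (EE j).injective (Subtype.ext h)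

lemma e_surjOn (j : Fin (CC k)) {q : Fin (2*k)} (hq : q ∈ S j) : ∃ x, e j x = q :=
  ⟨(EE j).symm ⟨q, hq⟩, by simp [e]⟩

lemma pe (j : Fin (CC k)) (hinj : Set.InjOn (pmap k) ↑(S j)) (x : Fin k) :
    pmap k (e j x) = x := by
  simp only [e, EE, dif_pos hinj]
  exact Equiv.ofBijective_apply_symm_apply (fun x : ↥(S j) => pmap k ↑x) _ x

lemma image_state (j : Fin (CC k)) {g : Fin (2*k) → Fin k} (hg : Function.Surjective g) :
    Finset.univ.image (fun q => e j (g q)) = S j := by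
  ext z
  simp only [mem_image, mem_univ, true_and]
  constructor
  · rintro ⟨q, rfl⟩; exact e_mem j _
  · intro hz
    obtain ⟨x, hx⟩ := e_surjOn j hz
    obtain ⟨q, rfl⟩ := hg x
    exact ⟨q, hx⟩


/-- wrap permutation: τ when completing the cycle, else identity -/
def wr (τ : Equiv.Perm (Fin k)) (j : Fin (CC k)) : Equiv.Perm (Fin k) :=
  if (j : ℕ) = CC k - 1 then τ else 1

open Classical in
/-- cycle letters -/
noncomputable def la (τ : Equiv.Perm (Fin k)) (j : Fin (CC k)) :
    Fin (2*k) → Option (Fin (2*k)) :=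
  fun q => if h : q ∈ S j then some (e (j+1) (wr τ j ((EE j).symm ⟨q, h⟩))) else none

/-- the total reset letter -/
noncomputable def al (k : ℕ) : Fin (2*k) → Option (Fin (2*k)) :=
  fun q => some (e 0 (pmap k q))

/-- the nowhere defined letter -/
def bt (k : ℕ) : Fin (2*k) → Option (Fin (2*k)) := fun _ => none

open Classical in
noncomputable def A (τ : Equiv.Perm (Fin k)) : Finset (Fin (2*k) → Option (Fin (2*k))) :=
  insert (al k) (insert (bt k) ((Finset.univ : Finset (Fin (CC k))).image (la τ)))

def lst (k : ℕ) : Fin (CC k) := ⟨CC k - 1, by have := one_le_CC k; omega⟩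

/-- the hard total transformation -/
noncomputable def ff (τ : Equiv.Perm (Fin k)) : Fin (2*k) → Fin (2*k) :=
  fun q => e (lst k) ((τ ^ (orderOf τ - 1)) (pmap k q))

lemma la_e (τ : Equiv.Perm (Fin k)) (j : Fin (CC k)) (y : Fin k) :
    la τ j (e j y) = some (e (j+1) (wr τ j y)) := by
  have hmem := e_mem j y
  simp only [la, dif_pos hmem]
  have h1 : (⟨e j y, hmem⟩ : ↥(S j)) = EE j y := Subtype.ext rfl
  rw [h1, Equiv.symm_apply_apply]

lemma la_none (τ : Equiv.Perm (Fin k)) (j : Fin (CC k)) {q : Fin (2*k)} (h : q ∉ S j) :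
    la τ j q = none := by
  simp only [la, dif_neg h]

lemma mem_S_iff_isSome (τ : Equiv.Perm (Fin k)) (j : Fin (CC k)) (q : Fin (2*k)) :
    q ∈ S j ↔ (la τ j q).isSome := by
  by_cases h : q ∈ S j <;> simp [la, h]

lemma la_inj (τ : Equiv.Perm (Fin k)) : Function.Injective (la τ) := by
  intro i j h
  apply S_inj (k := k)
  ext q
  rw [mem_S_iff_isSome τ i, mem_S_iff_isSome τ j, h]

lemma exists_not_mem_S (hk : 1 ≤ k) (j : Fin (CC k)) : ∃ q, q ∉ S j := by
  by_contra h
  push_neg at h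
  have hsub : (Finset.univ : Finset (Fin (2*k))) ⊆ S j := fun q _ => h q
  have := Finset.card_le_card hsub
  rw [S_card] at this
  simp at this
  omega

lemma al_mem (τ : Equiv.Perm (Fin k)) : al k ∈ A τ := Finset.mem_insert_self _ _

lemma la_mem (τ : Equiv.Perm (Fin k)) (j : Fin (CC k)) : la τ j ∈ A τ := by
  classical
  simp [A]

lemma card_A (hk : 1 ≤ k) (τ : Equiv.Perm (Fin k)) : (A τ).card = CC k + 2 := by
  classical
  have y0 : Fin k := ⟨0, by omega⟩
  have q0 : Fin (2*k) := ⟨0, by omega⟩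
  have hbt : bt k ∉ (Finset.univ : Finset (Fin (CC k))).image (la τ) := by
    simp only [Finset.mem_image, mem_univ, true_and, not_exists]
    intro i hcon
    have := congrFun hcon (e i y0)
    rw [la_e] at this
    simp [bt] at this
  have hal1 : al k ≠ bt k := by
    intro hcon
    have := congrFun hcon q0
    simp [al, bt] at this
  have hal2 : al k ∉ (Finset.univ : Finset (Fin (CC k))).image (la τ) := by
    simp only [Finset.mem_image, mem_univ, true_and, not_exists]
    intro i hcon
    obtain ⟨q, hq⟩ := exists_not_mem_S hk i
    have := congrFun hcon q
    rw [la_none τ i hq] at this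
    simp [al] at this
  rw [A, Finset.card_insert_of_notMem (by simp [hal1, hal2]),
    Finset.card_insert_of_notMem hbt,
    Finset.card_image_of_injective _ (la_inj τ), Finset.card_univ, Fintype.card_fin]


/-- apply a word to an optional state -/
def extA {k : ℕ} (w : List (Fin (2*k) → Option (Fin (2*k)))) (o : Option (Fin (2*k))) :
    Option (Fin (2*k)) := w.foldl (fun o f => o.bind f) o

lemma ptApply_eq (w : List (Fin (2*k) → Option (Fin (2*k)))) (q : Fin (2*k)) :
    ptApply w q = extA w (some q) := rfl

lemma extA_nil (o : Option (Fin (2*k))) : extA ([] : List (Fin (2*k) → Option (Fin (2*k)))) o = o := rfl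

lemma extA_cons (x : Fin (2*k) → Option (Fin (2*k))) (w : List (Fin (2*k) → Option (Fin (2*k))))
    (o : Option (Fin (2*k))) : extA (x :: w) o = extA w (o.bind x) := rfl

lemma extA_append (u v : List (Fin (2*k) → Option (Fin (2*k)))) (o : Option (Fin (2*k))) :
    extA (u ++ v) o = extA v (extA u o) := List.foldl_append

lemma extA_none (w : List (Fin (2*k) → Option (Fin (2*k)))) : extA w none = none := by
  induction w with
  | nil => rfl
  | cons x v ih => rw [extA_cons, Option.bind_none]; exact ih

/-- Fin arithmetic helpers -/
lemma val_zero_CC : ((0 : Fin (CC k)) : ℕ) = 0 := rfl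

lemma val_add_one_of_lt {j : Fin (CC k)} (h : (j : ℕ) + 1 < CC k) :
    ((j + 1 : Fin (CC k)) : ℕ) = (j : ℕ) + 1 := by
  rw [Fin.val_add, Fin.val_one']
  have h2 : 1 % CC k = 1 := Nat.mod_eq_of_lt (by omega)
  rw [h2, Nat.mod_eq_of_lt h]

lemma lst_val : ((lst k : Fin (CC k)) : ℕ) = CC k - 1 := rfl

lemma lst_add_one : (lst k) + 1 = (0 : Fin (CC k)) := by
  apply Fin.ext
  rw [Fin.val_add, Fin.val_one', lst_val, val_zero_CC]
  rcases Nat.eq_or_lt_of_le (one_le_CC k) with h | h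
  · simp [← h]
  · rw [Nat.mod_eq_of_lt h, Nat.sub_add_cancel (one_le_CC k), Nat.mod_self]

lemma wr_lst (τ : Equiv.Perm (Fin k)) : wr τ (lst k) = τ := if_pos rfl

lemma seg (τ : Equiv.Perm (Fin k)) :
    ∀ (d : ℕ) (j : Fin (CC k)), (j : ℕ) + d = CC k - 1 →
    ∃ w : List (Fin (2*k) → Option (Fin (2*k))),
      (∀ x ∈ w, x ∈ A τ) ∧ w.length = d ∧
      ∀ y, extA w (some (e j y)) = some (e (lst k) y) := by
  intro d
  induction d with
  | zero =>
    intro j hj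
    refine ⟨[], by simp, rfl, fun y => ?_⟩
    have : j = lst k := Fin.ext (by rw [lst_val]; omega)
    rw [this]; rfl
  | succ d ihd =>
    intro j hj
    have hlt : (j : ℕ) + 1 < CC k := by have := j.isLt; omega
    have hj1 : ((j + 1 : Fin (CC k)) : ℕ) = (j : ℕ) + 1 := val_add_one_of_lt hlt
    obtain ⟨w, hw1, hw2, hw3⟩ := ihd (j + 1) (by omega)
    refine ⟨la τ j :: w, ?_, by simp [hw2], fun y => ?_⟩
    · intro x hx
      rcases List.mem_cons.mp hx with rfl | h
      · exact la_mem τ j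
      · exact hw1 _ h
    · rw [extA_cons, Option.bind_some, la_e, show wr τ j = 1 from if_neg (by omega)]
      simp only [Equiv.Perm.one_apply]
      exact hw3 y

lemma loop (τ : Equiv.Perm (Fin k)) :
    ∃ w : List (Fin (2*k) → Option (Fin (2*k))),
      (∀ x ∈ w, x ∈ A τ) ∧ w.length = CC k ∧
      ∀ y, extA w (some (e (0 : Fin (CC k)) y)) = some (e (0 : Fin (CC k)) (τ y)) := by
  obtain ⟨w, h1, h2, h3⟩ := seg τ (CC k - 1) 0 (by simp [val_zero_CC])
  refine ⟨w ++ [la τ (lst k)], ?_, ?_, fun y => ?_⟩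
  · intro x hx
    rcases List.mem_append.mp hx with h | h
    · exact h1 _ h
    · rcases List.mem_singleton.mp h with rfl
      exact la_mem τ _
  · have := one_le_CC k
    simp [h2]; omega
  · rw [extA_append, h3, show extA [la τ (lst k)] (some (e (lst k) y))
      = la τ (lst k) (e (lst k) y) from rfl, la_e, lst_add_one, wr_lst]

lemma iter (τ : Equiv.Perm (Fin k)) :
    ∀ s : ℕ, ∃ w : List (Fin (2*k) → Option (Fin (2*k))),
      (∀ x ∈ w, x ∈ A τ) ∧ w.length = s * CC k ∧
      ∀ y, extA w (some (e (0 : Fin (CC k)) y)) = some (e (0 : Fin (CC k)) ((τ ^ s) y)) := by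
  intro s
  induction s with
  | zero => exact ⟨[], by simp, by simp, fun y => by simp [extA_nil]⟩
  | succ s ihs =>
    obtain ⟨w1, h11, h12, h13⟩ := ihs
    obtain ⟨w2, h21, h22, h23⟩ := loop τ
    refine ⟨w1 ++ w2, ?_, ?_, fun y => ?_⟩
    · intro x hx
      rcases List.mem_append.mp hx with h | h
      · exact h11 _ h
      · exact h21 _ h
    · simp [h12, h22]; ring
    · rw [extA_append, h13, h23, pow_succ', Equiv.Perm.mul_apply]

lemma express (τ : Equiv.Perm (Fin k)) :
    ∃ w, Expresses (A τ) w (fun q => some (ff τ q)) := by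
  obtain ⟨w1, h11, h12, h13⟩ := iter τ (orderOf τ - 1)
  obtain ⟨w2, h21, h22, h23⟩ := seg τ (CC k - 1) 0 (by simp [val_zero_CC])
  refine ⟨al k :: (w1 ++ w2), by simp, ?_, funext fun q => ?_⟩
  · intro g hg
    rcases List.mem_cons.mp hg with rfl | hg
    · exact al_mem τ
    · rcases List.mem_append.mp hg with h | h
      · exact h11 _ h
      · exact h21 _ h
  · rw [ptApply_eq, extA_cons, Option.bind_some, show al k q = some (e 0 (pmap k q)) from rfl,
      extA_append, h13, h23]
    rfl


lemma surj_state (τ : Equiv.Perm (Fin k)) (t : ℕ) :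
    Function.Surjective (fun q : Fin (2*k) => (τ ^ t) (pmap k q)) :=
  (Equiv.surjective (τ ^ t)).comp (pmap_surj k)

lemma inv (hk : 1 ≤ k) (τ : Equiv.Perm (Fin k)) :
    ∀ (u : List (Fin (2*k) → Option (Fin (2*k)))), (∀ x ∈ u, x ∈ A τ) →
    ∀ (j : Fin (CC k)) (t : ℕ),
      (∀ q, extA u (some (e j ((τ ^ t) (pmap k q)))) = some (ff τ q)) →
      orderOf τ * CC k ≤ 1 + t * CC k + (j : ℕ) + u.length := by
  classical
  intro u
  induction u with
  | nil =>
    intro _ j t hstate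
    have hfun : ∀ q, e j ((τ ^ t) (pmap k q)) = e (lst k) ((τ ^ (orderOf τ - 1)) (pmap k q)) :=
      fun q => Option.some_injective _ (hstate q)
    have hS : S j = S (lst k) := by
      rw [← image_state j (surj_state τ t), ← image_state (lst k) (surj_state τ (orderOf τ - 1))]
      exact Finset.image_congr (fun q _ => hfun q)
    have hj : j = lst k := S_inj hS
    subst hj
    have hpow : τ ^ t = τ ^ (orderOf τ - 1) := by
      apply Equiv.ext
      intro x
      obtain ⟨q, rfl⟩ := pmap_surj k x
      exact e_inj _ (hfun q)
    have hm : 0 < orderOf τ := orderOf_pos τ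
    have hmod : t % orderOf τ = (orderOf τ - 1) % orderOf τ := pow_eq_pow_iff_modEq.mp hpow
    have hmm : (orderOf τ - 1) % orderOf τ = orderOf τ - 1 := Nat.mod_eq_of_lt (by omega)
    rw [hmm] at hmod
    have hmle : t % orderOf τ ≤ t := Nat.mod_le t _
    have ht : orderOf τ - 1 ≤ t := by omega
    have hC := one_le_CC k
    have h1 : (orderOf τ - 1) * CC k ≤ t * CC k := Nat.mul_le_mul_right _ ht
    have h2 : orderOf τ * CC k = (orderOf τ - 1) * CC k + CC k := by
      conv_lhs => rw [show orderOf τ = (orderOf τ - 1) + 1 by omega]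
      ring
    rw [lst_val]
    simp only [List.length_nil]
    omega
  | cons x v ih =>
    intro hu j t hstate
    have hv : ∀ y ∈ v, y ∈ A τ := fun y hy => hu y (List.mem_cons_of_mem _ hy)
    have hst : ∀ q, extA v (x (e j ((τ ^ t) (pmap k q)))) = some (ff τ q) := hstate
    have hx := hu x (List.mem_cons_self)
    simp only [A, Finset.mem_insert, Finset.mem_image, Finset.mem_univ, true_and] at hx
    have hC := one_le_CC k
    rcases hx with rfl | rfl | ⟨i, rfl⟩
    · -- x = al k
      by_cases hinj : Set.InjOn (pmap k) ↑(S j)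
      · have hst' : ∀ q, extA v (some (e (0 : Fin (CC k)) ((τ ^ t) (pmap k q)))) = some (ff τ q) := by
          intro q
          have h1 : al k (e j ((τ ^ t) (pmap k q)))
              = some (e (0 : Fin (CC k)) ((τ ^ t) (pmap k q))) := by
            simp [al, pe j hinj]
          rw [← h1]
          exact hst q
        have := ih hv 0 t hst'
        rw [val_zero_CC] at this
        simp only [List.length_cons]
        omega
      · exfalso
        set H : Fin (2*k) → Fin k := fun q => pmap k (e j ((τ ^ t) (pmap k q))) with hH
        set G : Fin k → Option (Fin (2*k)) :=
          fun y => extA v (some (e (0 : Fin (CC k)) y)) with hG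
        have hGH : ∀ q, G (H q) = some (ff τ q) := fun q => hst q
        have himg : (Finset.univ.image fun q => some (ff τ q))
            = (Finset.univ.image H).image G := by
          rw [Finset.image_image]
          exact Finset.image_congr (fun q _ => (hGH q).symm)
        have h1 : (Finset.univ.image fun q => some (ff τ q)).card
            ≤ (Finset.univ.image H).card := by
          rw [himg]; exact Finset.card_image_le
        have h2 : (Finset.univ.image fun q => some (ff τ q)).card = k := by
          have e1 : (Finset.univ.image fun q => some (ff τ q))
              = (Finset.univ.image (ff τ)).image some := by
            rw [Finset.image_image]; rfl
          rw [e1, Finset.card_image_of_injective _ (Option.some_injective _)]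
          have e2 : Finset.univ.image (ff τ) = S (lst k) :=
            image_state (lst k) (surj_state τ (orderOf τ - 1))
          rw [e2, S_card]
        have h3 : (Finset.univ.image H).card < k := by
          have e3 : Finset.univ.image H = (S j).image (pmap k) := by
            rw [← image_state j (surj_state τ t), Finset.image_image]
            rfl
          rw [e3]
          have hle : ((S j).image (pmap k)).card ≤ (S j).card := Finset.card_image_le
          have hne : ((S j).image (pmap k)).card ≠ (S j).card :=
            fun hcard => hinj (Finset.injOn_of_card_image_eq hcard)
          have := S_card j
          omega
        omega
    · -- x = bt k
      exfalso
      have := hst ⟨0, by omega⟩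
      rw [show bt k (e j ((τ ^ t) (pmap k ⟨0, by omega⟩))) = none from rfl, extA_none] at this
      cases this
    · -- x = la τ i
      have hsub : ∀ y : Fin k, e j y ∈ S i := by
        by_contra hcon
        push_neg at hcon
        obtain ⟨y, hy⟩ := hcon
        obtain ⟨q0, hq0⟩ := pmap_surj k ((τ ^ t).symm y)
        have h0 := hst q0
        rw [hq0, Equiv.apply_symm_apply, la_none τ i hy, extA_none] at h0
        cases h0
      have hSsub : S j ⊆ S i := by
        intro q hq
        obtain ⟨y, rfl⟩ := e_surjOn j hq
        exact hsub y
      have hij : i = j := by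
        have := Finset.eq_of_subset_of_card_le hSsub (by rw [S_card, S_card])
        exact (S_inj this).symm
      subst hij
      have hst2 : ∀ q, extA v (some (e (i+1) (wr τ i ((τ ^ t) (pmap k q))))) = some (ff τ q) := by
        intro q
        rw [← la_e]
        exact hst q
      by_cases hj : (i : ℕ) = CC k - 1
      · have hwr : wr τ i = τ := if_pos hj
        have hilst : i = lst k := Fin.ext (by rw [lst_val]; exact hj)
        have hj1 : i + 1 = (0 : Fin (CC k)) := by rw [hilst]; exact lst_add_one
        have hst3 : ∀ q, extA v (some (e (0 : Fin (CC k)) ((τ ^ (t+1)) (pmap k q))))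
            = some (ff τ q) := by
          intro q
          have := hst2 q
          rw [hwr, hj1] at this
          rw [pow_succ', Equiv.Perm.mul_apply]
          exact this
        have := ih hv 0 (t+1) hst3
        rw [val_zero_CC] at this
        have harith : (t+1) * CC k = t * CC k + CC k := by ring
        simp only [List.length_cons]
        omega
      · have hwr : wr τ i = 1 := if_neg hj
        have hlt : (i : ℕ) + 1 < CC k := by have := i.isLt; omega
        have hj1 : ((i + 1 : Fin (CC k)) : ℕ) = (i : ℕ) + 1 := val_add_one_of_lt hlt
        have hst3 : ∀ q, extA v (some (e (i+1) ((τ ^ t) (pmap k q)))) = some (ff τ q) := by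
          intro q
          have := hst2 q
          rw [hwr] at this
          simpa using this
        have := ih hv (i+1) t hst3
        rw [hj1] at this
        simp only [List.length_cons]
        omega

end DLB

/-- For every `k ≥ 1`, there is an alphabet of `(2k choose k) + 2` partial transformations
of a `2k`-element set and a total transformation `f` of the `2k`-element set expressed by
some nonempty word over it, such that every nonempty word expressing `f` has length at least
`(2k choose k) · g(k)`, where `g` is the Landau function. -/
theorem diam_lower_bound_exponential_alphabet (k : ℕ) (hk : 1 ≤ k) :
    ∃ A : Finset (Fin (2 * k) → Option (Fin (2 * k))),
      A.card = Nat.choose (2 * k) k + 2 ∧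
      ∃ f : Fin (2 * k) → Fin (2 * k),
        (∃ w, Expresses A w (fun q => some (f q))) ∧
        (∀ w, Expresses A w (fun q => some (f q)) →
          Nat.choose (2 * k) k * landau k ≤ w.length) := by
  classical
  obtain ⟨τ, -, hτ⟩ := Finset.exists_mem_eq_sup
    (Finset.univ : Finset (Equiv.Perm (Fin k))) Finset.univ_nonempty
    (fun σ => orderOf σ)
  have hτ' : landau k = orderOf τ := hτ
  refine ⟨DLB.A τ, DLB.card_A hk τ, DLB.ff τ, DLB.express τ, ?_⟩
  intro w hw
  obtain ⟨hne, hmem, heq⟩ := hw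
  have hq : ∀ q, ptApply w q = some (DLB.ff τ q) := fun q => congrFun heq q
  cases w with
  | nil => exact absurd rfl hne
  | cons x v =>
    have hv : ∀ y ∈ v, y ∈ DLB.A τ := fun y hy => hmem y (List.mem_cons_of_mem _ hy)
    have hx := hmem x (List.mem_cons_self)
    simp only [DLB.A, Finset.mem_insert, Finset.mem_image, Finset.mem_univ, true_and] at hx
    have hstate : ∀ q, DLB.extA v (x q) = some (DLB.ff τ q) := fun q => hq q
    rcases hx with rfl | rfl | ⟨i, rfl⟩
    · -- first letter is al
      have hst : ∀ q, DLB.extA v (some (DLB.e (0 : Fin (DLB.CC k)) ((τ ^ 0) (DLB.pmap k q))))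
          = some (DLB.ff τ q) := by
        intro q
        have := hstate q
        rw [show DLB.al k q = some (DLB.e (0 : Fin (DLB.CC k)) (DLB.pmap k q)) from rfl] at this
        simpa using this
      have hb := DLB.inv hk τ v hv 0 0 hst
      rw [DLB.val_zero_CC] at hb
      rw [hτ']
      simp only [List.length_cons]
      have : Nat.choose (2 * k) k * orderOf τ = orderOf τ * DLB.CC k := by
        rw [Nat.mul_comm]
      omega
    · -- first letter bt: impossible
      exfalso
      have := hstate ⟨0, by omega⟩
      rw [show DLB.bt k (⟨0, by omega⟩ : Fin (2*k)) = none from rfl, DLB.extA_none] at this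
      cases this
    · -- first letter la i: impossible
      exfalso
      obtain ⟨q0, hq0⟩ := DLB.exists_not_mem_S hk i
      have := hstate q0
      rw [DLB.la_none τ i hq0, DLB.extA_none] at this
      cases this
end

section
/- For every natural number n ≥ 9 with n ≡ 4 (mod 5), there exist two n × n matrices M₁, M₂ with entries in {0, 1} ⊆ ℕ such that the multiplicative semigroup generated by {M₁, M₂} is finite, and some element of this semigroup has depth at least 4^((n−4)/5) with respect to the generators {M₁, M₂} (i.e., every product of generators equal to this element has length at least 4^((n−4)/5)). -/
namespace MSD

variable {n : ℕ}

/-- Matrix of a partial map. -/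
def matOf (f : Fin n → Option (Fin n)) : Matrix (Fin n) (Fin n) ℕ :=
  Matrix.of fun p q => if f p = some q then 1 else 0

/-- Composition of partial maps (apply `f` first, then `g`). -/
def pcomp (f g : Fin n → Option (Fin n)) : Fin n → Option (Fin n) :=
  fun x => (f x).bind g

lemma matOf_apply (f : Fin n → Option (Fin n)) (p q : Fin n) :
    matOf f p q = if f p = some q then 1 else 0 := rfl

lemma matOf_zeroOne (f : Fin n → Option (Fin n)) (p q : Fin n) :
    matOf f p q = 0 ∨ matOf f p q = 1 := by
  rw [matOf_apply]; split <;> simp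

lemma matOf_mul_aux (o : Option (Fin n)) (g : Fin n → Option (Fin n)) (q : Fin n) :
    (∑ x : Fin n, (if o = some x then 1 else 0) * if g x = some q then (1:ℕ) else 0) =
      if o.bind g = some q then 1 else 0 := by
  cases o with
  | none => simp
  | some r =>
    rw [Finset.sum_eq_single r]
    · simp
    · intro b _ hb
      simp [Option.some_inj, (Ne.symm hb)]
    · simp

lemma matOf_mul (f g : Fin n → Option (Fin n)) :
    matOf f * matOf g = matOf (pcomp f g) := by
  ext p q
  simp only [Matrix.mul_apply, matOf, Matrix.of_apply, pcomp]
  exact matOf_mul_aux (f p) g q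

lemma matOf_injective : Function.Injective (matOf (n := n)) := by
  intro f g h
  funext x
  cases hf : f x with
  | some y =>
    have h1 : matOf f x y = 1 := by simp [matOf_apply, hf]
    have h2 : matOf g x y = 1 := by rw [← h]; exact h1
    rw [matOf_apply] at h2
    by_contra hne
    rcases hg : g x with _ | z
    · simp [hg] at h2
    · simp [hg] at h2
      exact hne (by rw [hg, h2])
  | none =>
    rcases hg : g x with _ | z
    · rfl
    · have h2 : matOf g x z = 1 := by simp [matOf_apply, hg]
      have h1 : matOf f x z = 1 := by rw [h]; exact h2
      simp [matOf_apply, hf] at h1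

lemma matOf_one : matOf (fun x : Fin n => some x) = 1 := by
  ext p q
  rw [matOf_apply, Matrix.one_apply]
  by_cases h : p = q
  · simp [h]
  · simp [h]

/-- every nonempty product of matrices of partial maps is a matrix of a partial map -/
lemma prod_mem_range (A B : Matrix (Fin n) (Fin n) ℕ)
    (fA fB : Fin n → Option (Fin n)) (hA : A = matOf fA) (hB : B = matOf fB) :
    ∀ w : List (Matrix (Fin n) (Fin n) ℕ), (∀ X ∈ w, X = A ∨ X = B) →
      ∃ f, w.prod = matOf f := by
  intro w
  induction w with
  | nil => intro _; exact ⟨_, matOf_one.symm⟩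
  | cons X rest ih =>
    intro hw
    obtain ⟨g, hg⟩ := ih (fun Y hY => hw Y (List.mem_cons_of_mem _ hY))
    have hX := hw X List.mem_cons_self
    rcases hX with h | h
    · exact ⟨pcomp fA g, by rw [List.prod_cons, hg, h, hA, matOf_mul]⟩
    · exact ⟨pcomp fB g, by rw [List.prod_cons, hg, h, hB, matOf_mul]⟩

lemma semigroup_finite (A B : Matrix (Fin n) (Fin n) ℕ)
    (fA fB : Fin n → Option (Fin n)) (hA : A = matOf fA) (hB : B = matOf fB) :
    {M : Matrix (Fin n) (Fin n) ℕ |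
      ∃ w : List (Matrix (Fin n) (Fin n) ℕ),
        w ≠ [] ∧ (∀ X ∈ w, X = A ∨ X = B) ∧ w.prod = M}.Finite := by
  apply Set.Finite.subset (Set.finite_range (matOf (n := n)))
  rintro M ⟨w, -, hw, hprod⟩
  obtain ⟨f, hf⟩ := prod_mem_range A B fA fB hA hB w hw
  exact ⟨f, by rw [← hf, hprod]⟩

/-- zero row is absorbing under right multiplication -/
lemma zero_row_absorb (M N : Matrix (Fin n) (Fin n) ℕ) (p : Fin n)
    (h : ∀ q, M p q = 0) : ∀ q, (M * N) p q = 0 := by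
  intro q
  rw [Matrix.mul_apply]
  exact Finset.sum_eq_zero fun r _ => by rw [h r, zero_mul]


section NineCase

def c1 : Fin 9 → Option (Fin 9) := fun x => some (x + 1)
def c2 : Fin 9 → Option (Fin 9) := fun x => if x = 0 then none else some (x + 1)

/-- shift property of products of c1/c2 words -/
lemma nine_shift (A B : Matrix (Fin 9) (Fin 9) ℕ)
    (hA : A = matOf c1) (hB : B = matOf c2) :
    ∀ w : List (Matrix (Fin 9) (Fin 9) ℕ), (∀ X ∈ w, X = A ∨ X = B) →
      ∃ f, w.prod = matOf f ∧
        ∀ x y : Fin 9, f x = some y → (y : ℕ) = ((x : ℕ) + w.length) % 9 := by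
  intro w
  induction w with
  | nil =>
    intro _
    refine ⟨fun x => some x, matOf_one.symm, ?_⟩
    rintro x y ⟨rfl⟩
    simp [Nat.mod_eq_of_lt x.isLt]
  | cons X rest ih =>
    intro hw
    obtain ⟨g, hg, hshift⟩ := ih (fun Y hY => hw Y (List.mem_cons_of_mem _ hY))
    have hX := hw X List.mem_cons_self
    have key : ∀ fX : Fin 9 → Option (Fin 9),
        (∀ x z : Fin 9, fX x = some z → (z:ℕ) = ((x:ℕ)+1) % 9) →
        X = matOf fX →
        ∃ f, (X :: rest).prod = matOf f ∧
          ∀ x y : Fin 9, f x = some y → (y : ℕ) = ((x : ℕ) + (X :: rest).length) % 9 := by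
      intro fX hfX hXf
      refine ⟨pcomp fX g, by rw [List.prod_cons, hg, hXf, matOf_mul], ?_⟩
      intro x y hxy
      rcases hz : fX x with _ | z
      · rw [pcomp, hz] at hxy; simp at hxy
      · rw [pcomp, hz] at hxy
        simp only [Option.bind_some] at hxy
        have h1 := hfX x z hz
        have h2 := hshift z y hxy
        simp only [List.length_cons]
        omega
    rcases hX with h | h
    · refine key c1 ?_ (h.trans hA)
      rintro x z ⟨rfl⟩
      rw [Fin.add_def]
      rfl
    · refine key c2 ?_ (h.trans hB)
      intro x z hz
      rw [c2] at hz
      split at hz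
      · simp at hz
      · rw [Option.some_inj] at hz
        subst hz
        rw [Fin.add_def]
        rfl

theorem main9 :
    ∃ M₁ M₂ : Matrix (Fin 9) (Fin 9) ℕ,
      M₁ ≠ M₂ ∧
      (∀ p q, M₁ p q = 0 ∨ M₁ p q = 1) ∧
      (∀ p q, M₂ p q = 0 ∨ M₂ p q = 1) ∧
      {M : Matrix (Fin 9) (Fin 9) ℕ |
        ∃ w : List (Matrix (Fin 9) (Fin 9) ℕ),
          w ≠ [] ∧ (∀ X ∈ w, X = M₁ ∨ X = M₂) ∧ w.prod = M}.Finite ∧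
      ∃ M : Matrix (Fin 9) (Fin 9) ℕ,
        (∃ w : List (Matrix (Fin 9) (Fin 9) ℕ),
          w ≠ [] ∧ (∀ X ∈ w, X = M₁ ∨ X = M₂) ∧ w.prod = M) ∧
        (∀ w : List (Matrix (Fin 9) (Fin 9) ℕ),
          w ≠ [] → (∀ X ∈ w, X = M₁ ∨ X = M₂) → w.prod = M →
            4 ≤ w.length) := by
  refine ⟨matOf c1, matOf c2, ?_, matOf_zeroOne _, matOf_zeroOne _,
    semigroup_finite _ _ c1 c2 rfl rfl, matOf (fun x => some (x + 4)), ⟨?_, ?_⟩⟩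
  · intro h
    have h0 := congrFun (matOf_injective h) 0
    simp [c1, c2] at h0
  · refine ⟨[matOf c1, matOf c1, matOf c1, matOf c1], by simp,
      by intro X hX; left; simpa using hX, ?_⟩
    have e1 : [matOf c1, matOf c1, matOf c1, matOf c1].prod
        = matOf c1 * (matOf c1 * (matOf c1 * (matOf c1 * 1))) := by
      simp [List.prod_cons]
    rw [e1, ← matOf_one (n := 9), matOf_mul, matOf_mul, matOf_mul, matOf_mul]
    apply congrArg matOf
    funext x
    simp only [pcomp, c1, Option.bind_some]
    have : ∀ y : Fin 9, y + 1 + 1 + 1 + 1 = y + 4 := by decide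
    rw [this x]
  · intro w hne hw hprod
    obtain ⟨f, hf, hshift⟩ := nine_shift _ _ rfl rfl w hw
    have hfe : f = fun x => some (x + 4) := matOf_injective (by rw [← hf, hprod])
    have h0 : f 0 = some ((0 : Fin 9) + 4) := by rw [hfe]
    have h4 := hshift 0 _ h0
    have : (((0 : Fin 9) + 4 : Fin 9) : ℕ) = 4 := rfl
    rw [this] at h4
    simp only [Fin.val_zero, Nat.zero_add] at h4
    omega

end NineCase

inductive St : Type
  | V : ℕ → ℕ → St
  | NM : ℕ → St
  | DM : ℕ → St
  | W : ℕ → St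
  deriving DecidableEq

section Machine

variable (B R : ℕ)

def stepA : St → Option St
  | .V p t => if p = 0 then
      (if t + 1 < B then some (.NM (t+1)) else some (.DM 0))
    else some (.V (p-1) t)
  | .NM t => some (.V (R-2) t)
  | .DM _ => none
  | .W i => if i = 0 then some (.W (R-1)) else some (.W (i-1))

def stepB : St → Option St
  | .V p t => if p = 0 then
      (if t + 2 < B then some (.NM (t+2)) else some (.DM (t+2-B)))
    else some (.V (p-1) t)
  | .NM _ => none
  | .DM v => some (.V (R-2) v)
  | .W i => if i = 0 then some (.W (R-1))
      else if i = R-1 then none else some (.W (i-1))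

def car (ds : ℕ → ℕ) : ℕ → ℕ
  | 0 => 0
  | m + 1 => if B ≤ ds m + 1 + car ds m then 1 else 0

def drow : ℕ → ℕ → ℕ
  | 0, _ => 0
  | s + 1, m => (drow s m + 1 + car B (drow s) m) % B

def dg (s m : ℕ) : ℕ := drow B s m
def cg (s m : ℕ) : ℕ := car B (drow B s) m

def lamB (τ : ℕ) : Bool := cg B (τ / R) (τ % R) = 1

def cfg (τ tok : ℕ) : St :=
  if tok = 0 then .W (R - 1 - τ % R)
  else
    if τ % R ≤ tok - 1 then .V (tok - 1 - τ % R) (dg B (τ / R) (tok - 1))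
    else if τ % R = tok then
      (if cg B (τ / R) tok = 1 then .DM (dg B (τ / R + 1) (tok - 1))
       else .NM (dg B (τ / R + 1) (tok - 1)))
    else .V (R + tok - 1 - τ % R) (dg B (τ / R + 1) (tok - 1))

def stp : Bool → St → Option St
  | false => stepA B R
  | true => stepB B R

variable {B R}

lemma car_le (ds : ℕ → ℕ) (m : ℕ) : car B ds m ≤ 1 := by
  cases m with
  | zero => simp [car]
  | succ m => rw [car]; split <;> omega

lemma cg_le (s m : ℕ) : cg B s m ≤ 1 := car_le _ _

lemma dg_lt (hB : 2 ≤ B) (s m : ℕ) : dg B s m < B := by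
  cases s with
  | zero => simpa [dg, drow] using by omega
  | succ s => rw [dg, drow]; exact Nat.mod_lt _ (by omega)

lemma cg_zero (s : ℕ) : cg B s 0 = 0 := rfl

lemma cg_succ (s m : ℕ) :
    cg B s (m+1) = if B ≤ dg B s m + 1 + cg B s m then 1 else 0 := rfl

lemma dg_succ (s m : ℕ) :
    dg B (s+1) m = (dg B s m + 1 + cg B s m) % B := rfl

lemma dg_key (hB : 2 ≤ B) (s m : ℕ) :
    dg B (s+1) m + B * cg B s (m+1) = dg B s m + 1 + cg B s m := by
  have hd := dg_lt hB s m
  have hc := cg_le (B := B) s m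
  rw [dg_succ, cg_succ]
  by_cases h : B ≤ dg B s m + 1 + cg B s m
  · rw [if_pos h]
    have he : (dg B s m + 1 + cg B s m) % B = dg B s m + 1 + cg B s m - B := by
      rw [Nat.mod_eq_sub_mod h]
      exact Nat.mod_eq_of_lt (by omega)
    omega
  · rw [if_neg h]
    have he : (dg B s m + 1 + cg B s m) % B = dg B s m + 1 + cg B s m :=
      Nat.mod_eq_of_lt (by omega)
    omega

lemma mod_div_succ_lt (hR : 0 < R) {τ : ℕ} (hlt : τ % R + 1 < R) :
    (τ+1) % R = τ % R + 1 ∧ (τ+1) / R = τ / R := by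
  have hd : R * (τ / R) + τ % R = τ := Nat.div_add_mod τ R
  have e1 : τ + 1 = R * (τ / R) + (τ % R + 1) := by omega
  constructor
  · rw [e1, Nat.mul_add_mod]; exact Nat.mod_eq_of_lt hlt
  · rw [e1, Nat.mul_add_div hR, Nat.div_eq_of_lt hlt]
    omega

lemma mod_div_succ_eq (hR : 0 < R) {τ : ℕ} (heq : τ % R + 1 = R) :
    (τ+1) % R = 0 ∧ (τ+1) / R = τ / R + 1 := by
  have hd : R * (τ / R) + τ % R = τ := Nat.div_add_mod τ R
  have e1 : τ + 1 = R * (τ / R + 1) := by rw [Nat.mul_succ]; omega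
  constructor
  · rw [e1, Nat.mul_mod_right]
  · rw [e1, Nat.mul_div_cancel_left _ hR]

/-- both letters rotate a digit not at the processing position -/
lemma stp_rotV (b : Bool) (p t : ℕ) (hp : p ≠ 0) :
    stp B R b (.V p t) = some (.V (p-1) t) := by
  cases b <;> simp only [stp, stepA, stepB, if_neg hp]

/-- the transition lemma -/
lemma cfg_step (hB : 2 ≤ B) (hR : 3 ≤ R) (τ tok : ℕ) (htok : tok < R) :
    stp B R (lamB B R τ) (cfg B R τ tok) = some (cfg B R (τ+1) tok) := by
  have h0R : 0 < R := by omega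
  have hrlt : τ % R < R := Nat.mod_lt _ h0R
  by_cases h0 : tok = 0
  · -- wheel token
    subst h0
    rcases Nat.lt_or_ge (τ % R + 1) R with hw | hw
    · obtain ⟨hm1, hd1⟩ := mod_div_succ_lt h0R hw
      have hL : cfg B R τ 0 = .W (R - 1 - τ % R) := by
        simp only [cfg, if_true]
      have hR2 : cfg B R (τ+1) 0 = .W (R - 1 - (τ % R + 1)) := by
        simp only [cfg, if_true]; rw [hm1]
      rw [hL, hR2]
      have hne : R - 1 - τ % R ≠ 0 := by omega
      cases hlb : lamB B R τ
      · simp only [stp, stepA, if_neg hne, Option.some_inj, St.W.injEq]; omega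
      · have hrpos : τ % R ≠ 0 := by
          intro h
          have : lamB B R τ = false := by
            have : cg B (τ / R) (τ % R) = 0 := by rw [h, cg_zero]
            simp [lamB, this]
          rw [this] at hlb
          exact absurd hlb (by simp)
        have hne2 : R - 1 - τ % R ≠ R - 1 := by omega
        simp only [stp, stepB, if_neg hne, if_neg hne2, Option.some_inj, St.W.injEq]; omega
    · have hreq : τ % R + 1 = R := by omega
      obtain ⟨hm1, hd1⟩ := mod_div_succ_eq h0R hreq
      have hL : cfg B R τ 0 = .W 0 := by
        simp only [cfg, if_true]; rw [show R - 1 - τ % R = 0 by omega]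
      have hR2 : cfg B R (τ+1) 0 = .W (R - 1) := by
        simp only [cfg, if_true]; rw [hm1, Nat.sub_zero]
      rw [hL, hR2]
      cases hlb : lamB B R τ
      · simp only [stp, stepA]; simp
      · simp only [stp, stepB]; simp
  · -- digit token
    obtain ⟨m, rfl⟩ : ∃ m, tok = m + 1 := ⟨tok - 1, by omega⟩
    have hm : m < R - 1 := by omega
    have hkey := dg_key hB (τ / R) m
    have hdlt := dg_lt hB (τ / R) m
    have hdlt1 := dg_lt hB (τ / R + 1) m
    have hcle := cg_le (B := B) (τ / R) m
    have hcle1 := cg_le (B := B) (τ / R) (m+1)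
    have hlam : lamB B R τ = decide (cg B (τ / R) (τ % R) = 1) := rfl
    rcases Nat.lt_or_ge (τ % R) m with hcase | hcase
    · -- unprocessed digit rotates; no wrap (τ % R + 1 ≤ m < R-1)
      obtain ⟨hm1, hd1⟩ := mod_div_succ_lt (τ := τ) h0R (by omega)
      have hL : cfg B R τ (m+1) = .V (m - τ % R) (dg B (τ / R) m) := by
        simp only [cfg, Nat.add_sub_cancel]
        rw [if_neg h0, if_pos (by omega)]
      have hR2 : cfg B R (τ+1) (m+1) = .V (m - (τ % R + 1)) (dg B (τ / R) m) := by
        simp only [cfg, Nat.add_sub_cancel]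
        rw [if_neg h0, hm1, hd1, if_pos (by omega)]
      rw [hL, hR2, stp_rotV _ _ _ (by omega)]
      simp only [Option.some_inj, St.V.injEq]
      exact ⟨by omega, trivial⟩
    rcases Nat.eq_or_lt_of_le hcase with hrm | hcase2
    · -- processing step: τ % R = m
      have hrm : τ % R = m := hrm.symm
      obtain ⟨hm1, hd1⟩ := mod_div_succ_lt (τ := τ) h0R (by omega)
      have hL : cfg B R τ (m+1) = .V 0 (dg B (τ / R) m) := by
        simp only [cfg, Nat.add_sub_cancel]
        rw [if_neg h0, if_pos (by omega), show m - τ % R = 0 by omega]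
      have hR2 : cfg B R (τ+1) (m+1) =
          (if cg B (τ / R) (m+1) = 1 then St.DM (dg B (τ / R + 1) m)
            else St.NM (dg B (τ / R + 1) m)) := by
        simp only [cfg, Nat.add_sub_cancel]
        rw [if_neg h0, hm1, hd1, if_neg (by omega), if_pos (by omega)]
      rw [hL, hR2]
      have hcar := cg_succ (B := B) (τ / R) m
      by_cases hc : cg B (τ / R) m = 1
      · -- incoming carry : letter b
        have hlb : lamB B R τ = true := by rw [hlam, hrm, hc]; simp
        rw [hlb]
        simp only [stp, stepB]
        rw [if_pos trivial]
        by_cases hlt : dg B (τ / R) m + 2 < B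
        · rw [if_pos hlt, if_neg (by rw [hcar, hc]; rw [if_neg (by omega)]; omega)]
          simp only [Option.some_inj, St.NM.injEq]
          rw [hc] at hkey
          have hcc : cg B (τ / R) (m+1) = 0 := by rw [hcar, hc, if_neg (by omega)]
          rw [hcc] at hkey
          omega
        · rw [if_neg hlt, if_pos (by rw [hcar, hc]; rw [if_pos (by omega)])]
          simp only [Option.some_inj, St.DM.injEq]
          rw [hc] at hkey
          have hc1 : cg B (τ / R) (m+1) = 1 := by rw [hcar, hc, if_pos (by omega)]
          rw [hc1] at hkey
          omega
      · have hc0 : cg B (τ / R) m = 0 := by omega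
        have hlb : lamB B R τ = false := by rw [hlam, hrm]; simp [hc]
        rw [hlb]
        simp only [stp, stepA]
        rw [if_pos trivial]
        by_cases hlt : dg B (τ / R) m + 1 < B
        · rw [if_pos hlt, if_neg (by rw [hcar, hc0, if_neg (by omega)]; omega)]
          simp only [Option.some_inj, St.NM.injEq]
          rw [hc0] at hkey
          have hcc : cg B (τ / R) (m+1) = 0 := by rw [hcar, hc0, if_neg (by omega)]
          rw [hcc] at hkey
          omega
        · rw [if_neg hlt, if_pos (by rw [hcar, hc0, if_pos (by omega)])]
          simp only [Option.some_inj, St.DM.injEq]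
          rw [hc0] at hkey
          have hc1 : cg B (τ / R) (m+1) = 1 := by rw [hcar, hc0, if_pos (by omega)]
          rw [hc1] at hkey
          omega
    rcases Nat.eq_or_lt_of_le hcase2 with hrm1 | hcase3
    · -- marker settles: τ % R = m + 1
      have hrm : τ % R = m + 1 := hrm1.symm
      have hL : cfg B R τ (m+1) =
          (if cg B (τ / R) (m+1) = 1 then St.DM (dg B (τ / R + 1) m)
            else St.NM (dg B (τ / R + 1) m)) := by
        simp only [cfg, Nat.add_sub_cancel]
        rw [if_neg h0, if_neg (by omega), if_pos hrm]
      have hDMle : cg B (τ / R) (m+1) = 1 → dg B (τ / R + 1) m ≤ 1 := by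
        intro h1; rw [h1] at hkey; omega
      rcases Nat.lt_or_ge (τ % R + 1) R with hw | hw
      · obtain ⟨hm1, hd1⟩ := mod_div_succ_lt h0R hw
        have hR2 : cfg B R (τ+1) (m+1) = .V (R - 2) (dg B (τ / R + 1) m) := by
          simp only [cfg, Nat.add_sub_cancel]
          rw [if_neg h0, hm1, hd1, if_neg (by omega), if_neg (by omega),
            show R + (m+1) - 1 - (τ % R + 1) = R - 2 by omega]
        rw [hL, hR2]
        by_cases hc : cg B (τ / R) (m+1) = 1
        · have hlb : lamB B R τ = true := by rw [hlam, hrm, hc]; simp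
          rw [if_pos hc, hlb]
          simp only [stp, stepB]
        · have hlb : lamB B R τ = false := by rw [hlam, hrm]; simp [hc]
          rw [if_neg hc, hlb]
          simp only [stp, stepA]
      · -- wrap: m = R - 2, top marker settles into fresh sweep
        have hreq : τ % R + 1 = R := by omega
        obtain ⟨hm1, hd1⟩ := mod_div_succ_eq h0R hreq
        have hmR : m = R - 2 := by omega
        have hR2 : cfg B R (τ+1) (m+1) = .V m (dg B (τ / R + 1) m) := by
          simp only [cfg, Nat.add_sub_cancel]
          rw [if_neg h0, hm1, hd1, if_pos (by omega), Nat.sub_zero]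
        rw [hL, hR2]
        by_cases hc : cg B (τ / R) (m+1) = 1
        · have hlb : lamB B R τ = true := by rw [hlam, hrm, hc]; simp
          rw [if_pos hc, hlb]
          simp only [stp, stepB, Option.some_inj, St.V.injEq]
          exact ⟨by omega, trivial⟩
        · have hlb : lamB B R τ = false := by rw [hlam, hrm]; simp [hc]
          rw [if_neg hc, hlb]
          simp only [stp, stepA, Option.some_inj, St.V.injEq]
          exact ⟨by omega, trivial⟩
    · -- settled digit rotates: τ % R ≥ m + 2
      have hL : cfg B R τ (m+1) = .V (R + m - τ % R) (dg B (τ / R + 1) m) := by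
        simp only [cfg, Nat.add_sub_cancel]
        rw [if_neg h0, if_neg (by omega), if_neg (by omega),
          show R + (m+1) - 1 - τ % R = R + m - τ % R by omega]
      rcases Nat.lt_or_ge (τ % R + 1) R with hw | hw
      · obtain ⟨hm1, hd1⟩ := mod_div_succ_lt h0R hw
        have hR2 : cfg B R (τ+1) (m+1) = .V (R + m - (τ % R + 1)) (dg B (τ / R + 1) m) := by
          simp only [cfg, Nat.add_sub_cancel]
          rw [if_neg h0, hm1, hd1, if_neg (by omega), if_neg (by omega),
            show R + (m+1) - 1 - (τ % R + 1) = R + m - (τ % R + 1) by omega]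
        rw [hL, hR2, stp_rotV _ _ _ (by omega)]
        simp only [Option.some_inj, St.V.injEq]
        exact ⟨by omega, trivial⟩
      · have hreq : τ % R + 1 = R := by omega
        obtain ⟨hm1, hd1⟩ := mod_div_succ_eq h0R hreq
        have hR2 : cfg B R (τ+1) (m+1) = .V m (dg B (τ / R + 1) m) := by
          simp only [cfg, Nat.add_sub_cancel]
          rw [if_neg h0, hm1, hd1, if_pos (by omega), Nat.sub_zero]
        rw [hL, hR2, stp_rotV _ _ _ (by omega)]
        simp only [Option.some_inj, St.V.injEq]
        exact ⟨by omega, trivial⟩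

/-- the wrong letter always kills some token -/
lemma cfg_kill (hB : 2 ≤ B) (hR : 3 ≤ R) (τ : ℕ) :
    ∃ tok < R, stp B R (!lamB B R τ) (cfg B R τ tok) = none := by
  have h0R : 0 < R := by omega
  have hrlt : τ % R < R := Nat.mod_lt _ h0R
  have hlam : lamB B R τ = decide (cg B (τ / R) (τ % R) = 1) := rfl
  rcases Nat.eq_zero_or_pos (τ % R) with hr0 | hrpos
  · refine ⟨0, by omega, ?_⟩
    have hL : cfg B R τ 0 = .W (R - 1) := by
      simp only [cfg, if_true]; rw [hr0, Nat.sub_zero]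
    have hlf : lamB B R τ = false := by
      rw [hlam, hr0, cg_zero]; simp
    rw [hL, hlf]
    simp only [Bool.not_false, stp, stepB]
    rw [if_neg (by omega)]
    simp
  · refine ⟨τ % R, by omega, ?_⟩
    obtain ⟨m, hrm⟩ : ∃ m, τ % R = m + 1 := ⟨τ % R - 1, by omega⟩
    have hL : cfg B R τ (τ % R) =
        (if cg B (τ / R) (τ % R) = 1 then St.DM (dg B (τ / R + 1) (τ % R - 1))
          else St.NM (dg B (τ / R + 1) (τ % R - 1))) := by
      simp only [cfg]
      rw [if_neg (by omega), if_neg (by omega)]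
      simp
    rw [hL]
    by_cases hc : cg B (τ / R) (τ % R) = 1
    · rw [if_pos hc]
      have : lamB B R τ = true := by rw [hlam, hc]; simp
      rw [this]
      simp only [Bool.not_true, stp, stepA]
    · rw [if_neg hc]
      have : lamB B R τ = false := by rw [hlam]; simp [hc]
      rw [this]
      simp only [Bool.not_false, stp, stepB]

end Machine

-- ===== encoding, validity =====

def Valid (B R : ℕ) : St → Prop
  | .V p t => p < R - 1 ∧ t < B
  | .NM t => t < B
  | .DM v => v < 2
  | .W i => i < R

def enc (B R : ℕ) : St → ℕ
  | .V p t => p * B + t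
  | .NM t => (R-1) * B + t
  | .DM v => R * B + v
  | .W i => R * B + 2 + i

def dec (B R x : ℕ) : St :=
  if x < (R-1) * B then .V (x / B) (x % B)
  else if x < R * B then .NM (x - (R-1) * B)
  else if x < R * B + 2 then .DM (x - R * B)
  else .W (x - (R * B + 2))

section EncodeFacts

variable {B R : ℕ}

lemma RB_split (hB : 2 ≤ B) (hR : 3 ≤ R) : (R-1) * B + B = R * B := by
  have h1 : R - 1 + 1 = R := by omega
  calc (R-1) * B + B = (R - 1 + 1) * B := by rw [Nat.succ_mul]
    _ = R * B := by rw [h1]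

lemma encV_lt (hB : 2 ≤ B) (hR : 3 ≤ R) {p t : ℕ} (hp : p < R - 1) (ht : t < B) :
    p * B + t < (R-1) * B := by
  have h1 : p + 1 ≤ R - 1 := by omega
  have h2 : (p + 1) * B ≤ (R-1) * B := Nat.mul_le_mul_right _ h1
  rw [Nat.succ_mul] at h2
  omega

lemma enc_lt (hB : 2 ≤ B) (hR : 3 ≤ R) {s : St} (hv : Valid B R s) :
    enc B R s < R * B + 2 + R := by
  have hsp := RB_split hB hR
  cases s with
  | V p t =>
    obtain ⟨hp, ht⟩ := hv
    have := encV_lt hB hR hp ht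
    simp only [enc]
    omega
  | NM t => simp only [enc]; have : (t:ℕ) < B := hv; omega
  | DM v => simp only [enc]; have : (v:ℕ) < 2 := hv; omega
  | W i => simp only [enc]; have : (i:ℕ) < R := hv; omega

lemma dec_enc (hB : 2 ≤ B) (hR : 3 ≤ R) {s : St} (hv : Valid B R s) :
    dec B R (enc B R s) = s := by
  have hsp := RB_split hB hR
  have hB0 : 0 < B := by omega
  cases s with
  | V p t =>
    obtain ⟨hp, ht⟩ := hv
    have hlt := encV_lt hB hR hp ht
    rw [enc]; simp only [dec, if_pos hlt]
    have hdiv : (p * B + t) / B = p := by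
      rw [Nat.mul_comm, Nat.mul_add_div hB0, Nat.div_eq_of_lt ht]
      omega
    have hmod : (p * B + t) % B = t := by
      rw [Nat.mul_comm, Nat.mul_add_mod]
      exact Nat.mod_eq_of_lt ht
    rw [hdiv, hmod]
  | NM t =>
    have ht : (t:ℕ) < B := hv
    rw [enc]; simp only [dec]
    rw [if_neg (by omega), if_pos (by omega)]
    congr 1
    omega
  | DM v =>
    have hvlt : (v:ℕ) < 2 := hv
    rw [enc]; simp only [dec]
    rw [if_neg (by omega), if_neg (by omega), if_pos (by omega)]
    congr 1
    omega
  | W i =>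
    have hi : (i:ℕ) < R := hv
    rw [enc]; simp only [dec]
    rw [if_neg (by omega), if_neg (by omega), if_neg (by omega)]
    congr 1
    omega

lemma enc_inj (hB : 2 ≤ B) (hR : 3 ≤ R) {s s' : St}
    (hv : Valid B R s) (hv' : Valid B R s') (h : enc B R s = enc B R s') : s = s' := by
  have := dec_enc hB hR hv
  have h2 := dec_enc hB hR hv'
  rw [← this, ← h2, h]

lemma step_valid (hB : 2 ≤ B) (hR : 3 ≤ R) (b : Bool) {s s' : St}
    (hv : Valid B R s) (h : stp B R b s = some s') : Valid B R s' := by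
  cases b <;> cases s <;> simp only [stp, stepA, stepB] at h
  case false.DM v => simp at h
  case true.NM t => simp at h
  case false.V p t =>
    by_cases hp : p = 0
    · rw [if_pos hp] at h
      by_cases hlt : t + 1 < B
      · rw [if_pos hlt] at h
        cases h
        exact hlt
      · rw [if_neg hlt] at h
        cases h
        exact (by omega : (0:ℕ) < 2)
    · rw [if_neg hp] at h
      cases h
      exact ⟨by have := hv.1; omega, hv.2⟩
  case false.NM t =>
    cases h
    exact ⟨by omega, hv⟩
  case false.W i =>
    by_cases hp : i = 0
    · rw [if_pos hp] at h; cases h; exact (by omega : R - 1 < R)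
    · rw [if_neg hp] at h; cases h; exact (by have : i < R := hv; omega : i - 1 < R)
  case true.V p t =>
    by_cases hp : p = 0
    · rw [if_pos hp] at h
      by_cases hlt : t + 2 < B
      · rw [if_pos hlt] at h; cases h; exact hlt
      · rw [if_neg hlt] at h; cases h
        exact (by have : t < B := hv.2; omega : t + 2 - B < 2)
    · rw [if_neg hp] at h
      cases h
      exact ⟨by have := hv.1; omega, hv.2⟩
  case true.DM v =>
    cases h
    exact ⟨by omega, by have : v < 2 := hv; omega⟩
  case true.W i =>
    by_cases hp : i = 0
    · rw [if_pos hp] at h; cases h; exact (by omega : R - 1 < R)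
    · rw [if_neg hp] at h
      by_cases hq : i = R - 1
      · rw [if_pos hq] at h; cases h
      · rw [if_neg hq] at h; cases h
        exact (by have : i < R := hv; omega : i - 1 < R)

lemma cfg_valid (hB : 2 ≤ B) (hR : 3 ≤ R) (τ tok : ℕ) (htok : tok < R) :
    Valid B R (cfg B R τ tok) := by
  have hrlt : τ % R < R := Nat.mod_lt _ (by omega)
  by_cases h0 : tok = 0
  · subst h0
    simp only [cfg, if_true]
    exact (by omega : R - 1 - τ % R < R)
  · obtain ⟨m, rfl⟩ : ∃ m, tok = m + 1 := ⟨tok - 1, by omega⟩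
    have hm : m < R - 1 := by omega
    simp only [cfg, Nat.add_sub_cancel, if_neg h0]
    by_cases h1 : τ % R ≤ m
    · rw [if_pos h1]
      exact ⟨by omega, dg_lt hB _ _⟩
    · rw [if_neg h1]
      by_cases h2 : τ % R = m + 1
      · rw [if_pos h2]
        by_cases h3 : cg B (τ / R) (m+1) = 1
        · rw [if_pos h3]
          have hkey := dg_key hB (τ / R) m
          have := dg_lt hB (τ / R) m
          have := cg_le (B := B) (τ / R) m
          rw [h3] at hkey
          exact (by omega : dg B (τ / R + 1) m < 2)
        · rw [if_neg h3]
          exact dg_lt hB _ _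
      · rw [if_neg h2]
        exact ⟨by omega, dg_lt hB _ _⟩

end EncodeFacts

-- ===== value of a digit row, distinctness =====

section ValueFacts

variable {B R : ℕ}

def vfun (B K s : ℕ) : ℕ := ∑ m ∈ Finset.range K, dg B s m * B^m

def ones (B K : ℕ) : ℕ := ∑ m ∈ Finset.range K, B^m

lemma vfun_lt (hB : 2 ≤ B) (K s : ℕ) : vfun B K s < B^K := by
  induction K with
  | zero => simp [vfun]
  | succ K ih =>
    have h1 : dg B s K ≤ B - 1 := by have := dg_lt hB s K; omega
    have h2 : dg B s K * B^K ≤ (B-1) * B^K := Nat.mul_le_mul_right _ h1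
    have h3 : (B-1) * B^K + B^K = B * B^K := by
      calc (B-1) * B^K + B^K = (B-1+1) * B^K := (Nat.succ_mul _ _).symm
        _ = B * B^K := by rw [show B-1+1 = B by omega]
    have h5 : vfun B (K+1) s = vfun B K s + dg B s K * B^K := by
      rw [vfun, vfun, Finset.sum_range_succ]
    have h6 : B^(K+1) = B * B^K := by rw [pow_succ, Nat.mul_comm]
    have h4 : vfun B K s < B^K := ih
    omega

lemma vfun_step (hB : 2 ≤ B) (K s : ℕ) :
    vfun B K (s+1) + cg B s K * B^K = vfun B K s + ones B K := by
  have hpt : ∀ m, dg B (s+1) m * B^m + cg B s (m+1) * B^(m+1)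
      = dg B s m * B^m + B^m + cg B s m * B^m := by
    intro m
    have hk := dg_key hB s m
    calc dg B (s+1) m * B^m + cg B s (m+1) * B^(m+1)
        = (dg B (s+1) m + B * cg B s (m+1)) * B^m := by rw [pow_succ]; ring
      _ = (dg B s m + 1 + cg B s m) * B^m := by rw [hk]
      _ = dg B s m * B^m + B^m + cg B s m * B^m := by ring
  have hsum : ∑ m ∈ Finset.range K, (dg B (s+1) m * B^m + cg B s (m+1) * B^(m+1))
      = ∑ m ∈ Finset.range K, (dg B s m * B^m + B^m + cg B s m * B^m) :=
    Finset.sum_congr rfl (fun m _ => hpt m)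
  have hshift : ∑ m ∈ Finset.range K, cg B s (m+1) * B^(m+1)
      = ∑ m ∈ Finset.range K, cg B s m * B^m + cg B s K * B^K := by
    have h1 := Finset.sum_range_succ' (fun m => cg B s m * B^m) K
    have h2 := Finset.sum_range_succ (fun m => cg B s m * B^m) K
    rw [h2] at h1
    have h0 : cg B s 0 * B^0 = 0 := by rw [cg_zero]; ring
    rw [h0] at h1
    omega
  rw [Finset.sum_add_distrib, hshift] at hsum
  rw [Finset.sum_add_distrib, Finset.sum_add_distrib] at hsum
  have e1 : vfun B K (s+1) = ∑ m ∈ Finset.range K, dg B (s+1) m * B^m := rfl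
  have e2 : vfun B K s = ∑ m ∈ Finset.range K, dg B s m * B^m := rfl
  have e3 : ones B K = ∑ m ∈ Finset.range K, B^m := rfl
  omega

lemma vfun_mod (hB : 2 ≤ B) (K s : ℕ) :
    vfun B K s % B^K = (s * ones B K) % B^K := by
  induction s with
  | zero =>
    have : vfun B K 0 = 0 := by
      rw [vfun]
      exact Finset.sum_eq_zero (fun m _ => by simp [dg, drow])
    rw [this]
    simp
  | succ s ih =>
    have hst := vfun_step hB K s
    have : (vfun B K s + ones B K) % B^K = vfun B K (s+1) % B^K := by
      rw [← hst, Nat.add_mul_mod_self_right]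
    rw [← this, Nat.add_mod, ih, ← Nat.add_mod, Nat.succ_mul]

lemma ones_coprime (hB : 2 ≤ B) (K : ℕ) (hK : 1 ≤ K) :
    Nat.Coprime (ones B K) (B^K) := by
  have hmod : ones B K % B = 1 := by
    obtain ⟨K', rfl⟩ : ∃ K', K = K' + 1 := ⟨K - 1, by omega⟩
    have h1 := Finset.sum_range_succ' (fun m => B^m) K'
    have : ones B (K'+1) = (∑ i ∈ Finset.range K', B^(i+1)) + 1 := by
      rw [ones, h1]; norm_num
    have h2 : ∑ i ∈ Finset.range K', B^(i+1) = B * ∑ i ∈ Finset.range K', B^i := by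
      rw [Finset.mul_sum]
      exact Finset.sum_congr rfl (fun i _ => by rw [pow_succ]; ring)
    rw [this, h2, Nat.mul_add_mod]
    exact Nat.mod_eq_of_lt (by omega)
  have hcB : Nat.Coprime (ones B K) B := by
    have : Nat.gcd B (ones B K) = 1 := by
      rw [Nat.gcd_rec, hmod]
      exact Nat.gcd_one_left _
    exact Nat.coprime_comm.mp this
  exact hcB.pow_right K

lemma dg_inj (hB : 2 ≤ B) (K : ℕ) (hK : 1 ≤ K) {s s' : ℕ}
    (h : ∀ m < K, dg B s m = dg B s' m) : s % B^K = s' % B^K := by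
  have hv : vfun B K s = vfun B K s' :=
    Finset.sum_congr rfl (fun m hm => by rw [h m (Finset.mem_range.mp hm)])
  have h1 := vfun_mod hB K s
  have h2 := vfun_mod hB K s'
  rw [hv, h2] at h1
  have hco := ones_coprime hB K hK
  have hme : s * ones B K ≡ s' * ones B K [MOD B^K] := h1.symm
  exact Nat.ModEq.cancel_right_of_coprime hco.symm hme

end ValueFacts


-- ===== machine matrices over Fin n =====

section MachineMatrices

variable (B R n : ℕ)

/-- the matrix letter (as partial map on `Fin n`) for `b : Bool` -/
def fL (b : Bool) : Fin n → Option (Fin n) := fun x =>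
  (stp B R b (dec B R x.1)).bind fun s' =>
    if h : enc B R s' < n then some (⟨enc B R s', h⟩ : Fin n) else none

def Pfun : ℕ → Fin n → Option (Fin n)
  | 0 => fun x => some x
  | (ℓ+1) => pcomp (Pfun ℓ) (fL B R n (lamB B R ℓ))

def canList (ℓ : ℕ) : List (Matrix (Fin n) (Fin n) ℕ) :=
  (List.range ℓ).map (fun τ => matOf (fL B R n (lamB B R τ)))

variable {B R n}

lemma canList_length (ℓ : ℕ) : (canList B R n ℓ).length = ℓ := by
  simp [canList]

lemma canList_succ (ℓ : ℕ) :
    canList B R n (ℓ+1) = canList B R n ℓ ++ [matOf (fL B R n (lamB B R ℓ))] := by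
  simp [canList, List.range_succ]

lemma canProd (ℓ : ℕ) : (canList B R n ℓ).prod = matOf (Pfun B R n ℓ) := by
  induction ℓ with
  | zero =>
    have : canList B R n 0 = [] := rfl
    rw [this, List.prod_nil, ← matOf_one]
    rfl
  | succ ℓ ih =>
    rw [canList_succ, List.prod_append, List.prod_singleton, ih, matOf_mul]
    rfl

lemma fL_eval (hB : 2 ≤ B) (hR : 3 ≤ R) (b : Bool) (s : St)
    (hv : Valid B R s) (hlt : enc B R s < n) :
    fL B R n b ⟨enc B R s, hlt⟩ =
      (stp B R b s).bind fun s' =>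
        if h : enc B R s' < n then some (⟨enc B R s', h⟩ : Fin n) else none := by
  simp only [fL, dec_enc hB hR hv]

lemma fL_none (hB : 2 ≤ B) (hR : 3 ≤ R) (b : Bool) (s : St)
    (hv : Valid B R s) (hlt : enc B R s < n)
    (hnone : stp B R b s = none) :
    fL B R n b ⟨enc B R s, hlt⟩ = none := by
  rw [fL_eval hB hR b s hv hlt, hnone, Option.bind_none]

lemma fL_some (hB : 2 ≤ B) (hR : 3 ≤ R) (b : Bool) (s s' : St)
    (hv : Valid B R s) (hlt : enc B R s < n)
    (hlt' : enc B R s' < n) (hsome : stp B R b s = some s') :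
    fL B R n b ⟨enc B R s, hlt⟩ = some ⟨enc B R s', hlt'⟩ := by
  rw [fL_eval hB hR b s hv hlt, hsome, Option.bind_some, dif_pos hlt']

variable (hB : 2 ≤ B) (hR : 3 ≤ R) (hn : R * B + 2 + R ≤ n)

/-- encoded configuration token as an element of Fin n -/
def q0 (tok : ℕ) (htok : tok < R) (τ : ℕ) : Fin n :=
  ⟨enc B R (cfg B R τ tok),
    lt_of_lt_of_le (enc_lt hB hR (cfg_valid hB hR τ tok htok)) hn⟩

lemma track (tok : ℕ) (htok : tok < R) (ℓ : ℕ) :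
    Pfun B R n ℓ (q0 hB hR hn tok htok 0) = some (q0 hB hR hn tok htok ℓ) := by
  induction ℓ with
  | zero => rfl
  | succ ℓ ih =>
    have hstep := cfg_step hB hR ℓ tok htok
    show pcomp _ _ _ = _
    rw [pcomp, ih, Option.bind_some]
    exact fL_some hB hR (lamB B R ℓ) _ _ (cfg_valid hB hR ℓ tok htok) _ _ hstep

/-- junk: products where some tracked token's row has died -/
def Junk (M : Matrix (Fin n) (Fin n) ℕ) : Prop :=
  ∃ tok, ∃ htok : tok < R, ∀ q, M (q0 hB hR hn tok htok 0) q = 0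

lemma Junk_absorb {M N : Matrix (Fin n) (Fin n) ℕ} (h : Junk hB hR hn M) :
    Junk hB hR hn (M * N) := by
  obtain ⟨tok, htok, hrow⟩ := h
  exact ⟨tok, htok, zero_row_absorb M N _ hrow⟩

lemma not_junk_canon (ℓ : ℕ) : ¬ Junk hB hR hn (matOf (Pfun B R n ℓ)) := by
  rintro ⟨tok, htok, hrow⟩
  have h1 := hrow (q0 hB hR hn tok htok ℓ)
  rw [matOf_apply, track hB hR hn tok htok ℓ, if_pos rfl] at h1
  exact one_ne_zero h1

/-- the canonicity lemma: every non-junk word is a prefix of the canonical word -/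
lemma canon : ∀ w : List (Matrix (Fin n) (Fin n) ℕ),
    (∀ X ∈ w, X = matOf (fL B R n false) ∨ X = matOf (fL B R n true)) →
    ¬ Junk hB hR hn (w.prod) → w = canList B R n w.length := by
  intro w
  induction w using List.reverseRecOn with
  | nil => intro _ _; rfl
  | append_singleton ws g ih =>
    intro hw hnj
    have hwprod : (ws ++ [g]).prod = ws.prod * g := by
      rw [List.prod_append, List.prod_singleton]
    have hnj' : ¬ Junk hB hR hn (ws.prod) := by
      intro h
      exact hnj (by rw [hwprod]; exact Junk_absorb hB hR hn h)
    have hws := ih (fun X hX => hw X (List.mem_append_left _ hX)) hnj'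
    have hprodm : ws.prod = matOf (Pfun B R n ws.length) := by
      conv_lhs => rw [hws]
      rw [canProd]
    have hg := hw g (List.mem_append_right _ (List.mem_singleton_self g))
    by_cases hmatch : g = matOf (fL B R n (lamB B R ws.length))
    · rw [List.length_append, List.length_singleton, canList_succ, ← hws, ← hmatch]
    · exfalso
      apply hnj
      have hb : g = matOf (fL B R n (!lamB B R ws.length)) := by
        rcases hg with rfl | rfl <;> cases hlb : lamB B R ws.length <;>
          rw [hlb] at hmatch <;> first | exact absurd rfl hmatch | rfl
      obtain ⟨tok, htok, hkill⟩ := cfg_kill hB hR ws.length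
      refine ⟨tok, htok, ?_⟩
      intro q
      rw [hwprod, hprodm, hb, matOf_mul, matOf_apply]
      have hnone : pcomp (Pfun B R n ws.length) (fL B R n (!lamB B R ws.length))
          (q0 hB hR hn tok htok 0) = none := by
        rw [pcomp, track hB hR hn tok htok, Option.bind_some]
        exact fL_none hB hR _ _ (cfg_valid hB hR ws.length tok htok) _ hkill
      rw [hnone]
      simp

end MachineMatrices

section Distinct

variable {B R : ℕ}

/-- configurations equal to the final one must be at time ≥ T -/
lemma cfg_final (hB : 2 ≤ B) (hR : 3 ≤ R) (τ : ℕ)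
    (h : ∀ tok < R, cfg B R τ tok = cfg B R (R * (B^(R-1) - 1)) tok) :
    R * (B^(R-1) - 1) ≤ τ := by
  have h0R : 0 < R := by omega
  have hrlt : τ % R < R := Nat.mod_lt _ h0R
  have hMv : 2 ≤ B^(R-1) := by
    calc 2 ≤ B := hB
      _ = B^1 := (pow_one B).symm
      _ ≤ B^(R-1) := Nat.pow_le_pow_right (by omega) (by omega)
  have hTmod : (R * (B^(R-1) - 1)) % R = 0 := Nat.mul_mod_right _ _
  have hTdiv : (R * (B^(R-1) - 1)) / R = B^(R-1) - 1 := Nat.mul_div_cancel_left _ h0R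
  -- wheel forces τ % R = 0
  have hwheel := h 0 (by omega)
  simp only [cfg, if_true] at hwheel
  rw [hTmod, Nat.sub_zero, St.W.injEq] at hwheel
  have hr0 : τ % R = 0 := by omega
  -- digits force the counter value
  have hdg : ∀ m < R - 1, dg B (τ / R) m = dg B (B^(R-1) - 1) m := by
    intro m hm
    have hd := h (m+1) (by omega)
    simp only [cfg, Nat.add_sub_cancel, if_neg (by omega : ¬ (m+1 = 0))] at hd
    rw [hr0, hTmod, hTdiv, if_pos (Nat.zero_le m), if_pos (Nat.zero_le m),
      St.V.injEq] at hd
    exact hd.2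
  have hmod := dg_inj hB (R-1) (by omega) hdg
  rw [Nat.mod_eq_of_lt (by omega : B^(R-1) - 1 < B^(R-1))] at hmod
  have h1 : B^(R-1) - 1 ≤ τ / R := by
    have := Nat.mod_le (τ / R) (B^(R-1))
    omega
  have h2 : R * (τ / R) ≤ τ := by
    have := Nat.div_add_mod τ R
    omega
  calc R * (B^(R-1) - 1) ≤ R * (τ / R) := Nat.mul_le_mul_left _ h1
    _ ≤ τ := h2

end Distinct

/-- main machine theorem -/
theorem machine_depth (B R n : ℕ) (hB : 2 ≤ B) (hR : 3 ≤ R) (hn : R * B + 2 + R ≤ n) :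
    ∃ M₁ M₂ : Matrix (Fin n) (Fin n) ℕ,
      M₁ ≠ M₂ ∧
      (∀ p q, M₁ p q = 0 ∨ M₁ p q = 1) ∧
      (∀ p q, M₂ p q = 0 ∨ M₂ p q = 1) ∧
      {M : Matrix (Fin n) (Fin n) ℕ |
        ∃ w : List (Matrix (Fin n) (Fin n) ℕ),
          w ≠ [] ∧ (∀ X ∈ w, X = M₁ ∨ X = M₂) ∧ w.prod = M}.Finite ∧
      ∃ M : Matrix (Fin n) (Fin n) ℕ,
        (∃ w : List (Matrix (Fin n) (Fin n) ℕ),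
          w ≠ [] ∧ (∀ X ∈ w, X = M₁ ∨ X = M₂) ∧ w.prod = M) ∧
        (∀ w : List (Matrix (Fin n) (Fin n) ℕ),
          w ≠ [] → (∀ X ∈ w, X = M₁ ∨ X = M₂) → w.prod = M →
            R * (B^(R-1) - 1) ≤ w.length) := by
  have hMv : 2 ≤ B^(R-1) := by
    calc 2 ≤ B := hB
      _ = B^1 := (pow_one B).symm
      _ ≤ B^(R-1) := Nat.pow_le_pow_right (by omega) (by omega)
  have hT1 : 1 ≤ R * (B^(R-1) - 1) := by
    calc 1 = 1 * 1 := rfl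
      _ ≤ R * (B^(R-1) - 1) := Nat.mul_le_mul (by omega) (by omega)
  refine ⟨matOf (fL B R n false), matOf (fL B R n true), ?_, matOf_zeroOne _,
    matOf_zeroOne _, semigroup_finite _ _ _ _ rfl rfl,
    matOf (Pfun B R n (R * (B^(R-1) - 1))),
    ⟨canList B R n (R * (B^(R-1) - 1)), ?_, ?_, ?_⟩, ?_⟩
  · -- M₁ ≠ M₂
    intro hAB
    have hvW1 : Valid B R (St.W (R-1)) := by show R - 1 < R; omega
    have hvW2 : Valid B R (St.W (R-1-1)) := by show R - 1 - 1 < R; omega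
    have hlt1 : enc B R (St.W (R-1)) < n := lt_of_lt_of_le (enc_lt hB hR hvW1) hn
    have hlt2 : enc B R (St.W (R-1-1)) < n := lt_of_lt_of_le (enc_lt hB hR hvW2) hn
    have hA : fL B R n false ⟨enc B R (St.W (R-1)), hlt1⟩ =
        some ⟨enc B R (St.W (R-1-1)), hlt2⟩ := by
      refine fL_some hB hR false _ _ hvW1 _ _ ?_
      show stepA B R (St.W (R-1)) = some (St.W (R-1-1))
      simp only [stepA]
      rw [if_neg (by omega)]
    have hBm : fL B R n true ⟨enc B R (St.W (R-1)), hlt1⟩ = none := by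
      refine fL_none hB hR true _ hvW1 _ ?_
      show stepB B R (St.W (R-1)) = none
      simp only [stepB]
      rw [if_neg (by omega)]
      simp
    have e1 : matOf (fL B R n false) ⟨enc B R (St.W (R-1)), hlt1⟩
        ⟨enc B R (St.W (R-1-1)), hlt2⟩ = 1 := by
      rw [matOf_apply, hA, if_pos rfl]
    have e2 : matOf (fL B R n true) ⟨enc B R (St.W (R-1)), hlt1⟩
        ⟨enc B R (St.W (R-1-1)), hlt2⟩ = 0 := by
      rw [matOf_apply, hBm]
      simp
    rw [hAB, e2] at e1
    exact one_ne_zero e1.symm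
  · -- canonical word nonempty
    intro hnil
    have hl := canList_length (B := B) (R := R) (n := n) (R * (B^(R-1) - 1))
    rw [hnil] at hl
    simp only [List.length_nil] at hl
    omega
  · -- letters
    intro X hX
    simp only [canList, List.mem_map] at hX
    obtain ⟨τ, _, rfl⟩ := hX
    cases lamB B R τ
    · exact Or.inl rfl
    · exact Or.inr rfl
  · exact canProd _
  · -- the depth bound
    intro w hne hw hprod
    have hnj : ¬ Junk hB hR hn (w.prod) := by
      rw [hprod]
      exact not_junk_canon hB hR hn _
    have hcan := canon hB hR hn w hw hnj
    have hfn : Pfun B R n w.length = Pfun B R n (R * (B^(R-1) - 1)) := by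
      apply matOf_injective
      calc matOf (Pfun B R n w.length) = (canList B R n w.length).prod := (canProd _).symm
        _ = w.prod := by rw [← hcan]
        _ = _ := hprod
    have hcfg : ∀ tok < R, cfg B R w.length tok = cfg B R (R * (B^(R-1) - 1)) tok := by
      intro tok htok
      have h1 := track hB hR hn tok htok w.length
      have h2 := track hB hR hn tok htok (R * (B^(R-1) - 1))
      rw [hfn, h2, Option.some_inj] at h1
      have hval := congrArg Fin.val h1
      exact enc_inj hB hR (cfg_valid hB hR w.length tok htok)
        (cfg_valid hB hR _ tok htok) hval.symm
    exact cfg_final hB hR w.length hcfg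


end MSD

/-- For every `n ≥ 9` with `n ≡ 4 (mod 5)`, there are two `n × n` matrices over `ℕ` with
entries in `{0, 1}` generating a finite multiplicative semigroup in which some element has
depth at least `4 ^ ((n - 4) / 5)`: every nonempty product of generators equal to this
element has length at least `4 ^ ((n - 4) / 5)`. -/
theorem matrix_semigroup_depth_binary (n : ℕ) (hn : 9 ≤ n) (hmod : n % 5 = 4) :
    ∃ M₁ M₂ : Matrix (Fin n) (Fin n) ℕ,
      M₁ ≠ M₂ ∧
      (∀ p q, M₁ p q = 0 ∨ M₁ p q = 1) ∧
      (∀ p q, M₂ p q = 0 ∨ M₂ p q = 1) ∧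
      {M : Matrix (Fin n) (Fin n) ℕ |
        ∃ w : List (Matrix (Fin n) (Fin n) ℕ),
          w ≠ [] ∧ (∀ X ∈ w, X = M₁ ∨ X = M₂) ∧ w.prod = M}.Finite ∧
      ∃ M : Matrix (Fin n) (Fin n) ℕ,
        (∃ w : List (Matrix (Fin n) (Fin n) ℕ),
          w ≠ [] ∧ (∀ X ∈ w, X = M₁ ∨ X = M₂) ∧ w.prod = M) ∧
        (∀ w : List (Matrix (Fin n) (Fin n) ℕ),
          w ≠ [] → (∀ X ∈ w, X = M₁ ∨ X = M₂) → w.prod = M →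
            4 ^ ((n - 4) / 5) ≤ w.length) := by
  by_cases h9 : n = 9
  · subst h9
    have h4 : (4:ℕ) ^ ((9 - 4) / 5) = 4 := by norm_num
    obtain ⟨M₁, M₂, h1, h2, h3, hfin, M, hex, hbound⟩ := MSD.main9
    exact ⟨M₁, M₂, h1, h2, h3, hfin, M, hex,
      fun w a b c => by rw [h4]; exact hbound w a b c⟩
  · set k := (n - 4) / 5 with hkdef
    have hk2 : 2 ≤ k := by omega
    have hnk : n = 5 * k + 4 := by omega
    by_cases hk4 : k ≤ 4
    · -- base 3, ring size k+1
      have hcond : (k+1) * 3 + 2 + (k+1) ≤ n := by omega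
      obtain ⟨M₁, M₂, h1, h2, h3, hfin, M, hex, hbound⟩ :=
        MSD.machine_depth 3 (k+1) n (by omega) (by omega) hcond
      refine ⟨M₁, M₂, h1, h2, h3, hfin, M, hex, fun w hw1 hw2 hw3 => ?_⟩
      have hb := hbound w hw1 hw2 hw3
      have hnum : 4 ^ k ≤ (k+1) * (3 ^ ((k+1) - 1) - 1) := by
        interval_cases k <;> norm_num
      omega
    · -- base 4, ring size k
      have hk5 : 5 ≤ k := by omega
      have hcond : k * 4 + 2 + k ≤ n := by omega
      obtain ⟨M₁, M₂, h1, h2, h3, hfin, M, hex, hbound⟩ :=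
        MSD.machine_depth 4 k n (by omega) (by omega) hcond
      refine ⟨M₁, M₂, h1, h2, h3, hfin, M, hex, fun w hw1 hw2 hw3 => ?_⟩
      have hb := hbound w hw1 hw2 hw3
      have hnum : 4 ^ k ≤ k * (4 ^ (k - 1) - 1) := by
        have hx : 5 ≤ 4 ^ (k-1) := by
          calc (5:ℕ) ≤ 4^2 := by norm_num
            _ ≤ 4 ^ (k-1) := Nat.pow_le_pow_right (by norm_num) (by omega)
        have he : 4 ^ k = 4 * 4 ^ (k-1) := by
          conv_lhs => rw [show k = (k-1)+1 by omega]
          rw [pow_succ, Nat.mul_comm]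
        have hm : 5 * (4^(k-1) - 1) ≤ k * (4^(k-1) - 1) :=
          Nat.mul_le_mul_right _ (by omega)
        omega
      omega
end
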